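/- arXiv:2412.06031 — 5 statements merged into one kernel-verified Lean document; each statement's English description precedes it below -/
import Mathlib

section
/- For every integer n ≥ 2, the free group F_n of rank n is selfless with respect to its standard free generating set. -/
open Filter Monoid

/-- `wordBall T r`: elements of `K` expressible as a product of at most `r` elements
of `T ∪ T⁻¹` (so `1 ∈ wordBall T 0`). -/
def wordBall {K : Type*} [Group K] (T : Set K) (r : ℝ) : Set K :=
  {g | ∃ l : List K, (l.length : ℝ) ≤ r ∧ (∀ x ∈ l, x ∈ T ∨ x⁻¹ ∈ T) ∧ l.prod = g}

/-- A group `K` with generating set `T` is *selfless* if there are a function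
`f : ℕ → (0,∞)` with `liminf f(n)^{1/n} = 1` and, for each `n ≥ 1`, an epimorphism
`φₙ : K ∗ ⟨a⟩ → K` restricting to the identity on `K`, injective on the ball
`B_{T∪{a}}(n)`, and with `φₙ(B_{T∪{a}}(n)) ⊆ B_T(f(n))`.  Here `⟨a⟩` is an infinite
cyclic group, realized as `Multiplicative ℤ` with generator `a = ofAdd 1`. -/
def IsSelfless (K : Type*) [Group K] (T : Set K) : Prop :=
  ∃ f : ℕ → ℝ, (∀ n, 0 < f n) ∧
    Filter.liminf (fun n : ℕ => f n ^ ((n : ℝ)⁻¹)) Filter.atTop = 1 ∧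
    ∀ n : ℕ, 1 ≤ n → ∃ φ : Coprod K (Multiplicative ℤ) →* K,
      Function.Surjective φ ∧
      (∀ g : K, φ (Coprod.inl g) = g) ∧
      Set.InjOn φ (wordBall ((⇑(Coprod.inl : K →* Coprod K (Multiplicative ℤ))) '' T ∪
        {Coprod.inr (Multiplicative.ofAdd (1 : ℤ))}) n) ∧
      ⇑φ '' (wordBall ((⇑(Coprod.inl : K →* Coprod K (Multiplicative ℤ))) '' T ∪
        {Coprod.inr (Multiplicative.ofAdd (1 : ℤ))}) n) ⊆ wordBall T (f n)

namespace List

theorem chain'_cons {α : Type*} {R : α → α → Prop} {a b : α} {l : List α} :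
    Chain' R (a :: b :: l) ↔ R a b ∧ Chain' R (b :: l) := isChain_cons_cons

theorem chain'_cons' {α : Type*} {R : α → α → Prop} {x : α} {l : List α} :
    Chain' R (x :: l) ↔ (∀ y ∈ head? l, R x y) ∧ Chain' R l := isChain_cons

theorem chain'_append {α : Type*} {R : α → α → Prop} {l₁ l₂ : List α} :
    Chain' R (l₁ ++ l₂) ↔ Chain' R l₁ ∧ Chain' R l₂ ∧
      ∀ x ∈ l₁.getLast?, ∀ y ∈ l₂.head?, R x y := isChain_append

@[simp]
theorem chain'_nil {α : Type*} {R : α → α → Prop} : Chain' R [] := isChain_nil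

@[simp]
theorem chain'_singleton {α : Type*} {R : α → α → Prop} (a : α) : Chain' R [a] :=
  isChain_singleton a

end List

namespace Selfless

open FreeGroup List

/-- adjacent letters do not cancel -/
def NC {α : Type*} (a b : α × Bool) : Prop := ¬(a.1 = b.1 ∧ a.2 = !b.2)

section Reduced

variable {α : Type*} [DecidableEq α]

theorem chain'_of_reduce_eq : ∀ {L : List (α × Bool)}, FreeGroup.reduce L = L → L.Chain' NC := by
  intro L
  induction L with
  | nil => intro _; simp
  | cons x L' ih =>
    intro hred
    rw [FreeGroup.reduce.cons] at hred
    rcases hr : FreeGroup.reduce L' with _ | ⟨hd, tl⟩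
    · rw [hr] at hred
      simp only at hred
      have hnil : L' = [] := by
        injection hred with h1 h2
        exact h2.symm
      subst hnil
      simp
    · rw [hr] at hred
      simp only at hred
      split_ifs at hred with hc
      · exfalso
        have h1 : (FreeGroup.reduce L').length ≤ L'.length :=
          (FreeGroup.reduce.red (L := L')).length_le
        rw [hr] at h1
        have := congrArg List.length hred
        simp at this h1
        omega
      · have hL' : L' = hd :: tl := by
          injection hred with h1 h2
          exact h2.symm
        subst hL'
        exact List.chain'_cons.mpr ⟨hc, ih hr⟩

theorem reduce_eq_of_chain' : ∀ {L : List (α × Bool)}, L.Chain' NC → FreeGroup.reduce L = L := by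
  intro L
  induction L with
  | nil => intro _; rfl
  | cons x L' ih =>
    intro h
    have hL' : FreeGroup.reduce L' = L' := ih h.tail
    rw [FreeGroup.reduce.cons, hL']
    cases L' with
    | nil => rfl
    | cons hd tl =>
      simp only
      rw [if_neg (List.chain'_cons.mp h).1]

theorem chain'_toWord (x : FreeGroup α) : x.toWord.Chain' NC :=
  chain'_of_reduce_eq (FreeGroup.reduce_toWord x)

/-- The fundamental cancellation lemma for multiplying reduced words. -/
theorem cancel_spec : ∀ (V U : List (α × Bool)), V.Chain' NC → U.Chain' NC →
    ∃ p c s, V = p ++ c ∧ U = FreeGroup.invRev c ++ s ∧ (p ++ s).Chain' NC ∧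
      FreeGroup.reduce (V ++ U) = p ++ s := by
  intro V
  induction V using List.reverseRecOn with
  | nil =>
    intro U _ hU
    exact ⟨[], [], U, by simp [FreeGroup.invRev], by simp [FreeGroup.invRev],
      by simpa using hU, by simpa using reduce_eq_of_chain' hU⟩
  | append_singleton V' v ih =>
    intro U hV hU
    cases U with
    | nil =>
      refine ⟨V' ++ [v], [], [], by simp [FreeGroup.invRev], by simp [FreeGroup.invRev], ?_, ?_⟩
      · simpa using hV
      · simpa using reduce_eq_of_chain' hV
    | cons u U' =>
      by_cases hc : u = (v.1, !v.2)
      · -- cancellation at the junction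
        have hstep : FreeGroup.Red.Step (V' ++ [v] ++ (u :: U')) (V' ++ U') := by
          have : V' ++ [v] ++ (u :: U') = V' ++ (v.1, v.2) :: (v.1, !v.2) :: U' := by
            simp [hc]
          rw [this]
          exact FreeGroup.Red.Step.not
        have hVc : V'.Chain' NC := (List.chain'_append.mp hV).1
        have hUc : U'.Chain' NC := hU.tail
        obtain ⟨p, c', s, h1, h2, h3, h4⟩ := ih U' hVc hUc
        refine ⟨p, c' ++ [v], s, by rw [← List.append_assoc, ← h1], ?_, h3, ?_⟩
        · have : FreeGroup.invRev (c' ++ [v]) = (v.1, !v.2) :: FreeGroup.invRev c' := by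
            simp [FreeGroup.invRev]
          rw [this, ← hc]
          simp [h2]
        · rw [FreeGroup.reduce.Step.eq hstep, h4]
      · -- no cancellation: the concatenation is already reduced
        have hjunction : NC v u := by
          intro ⟨h1, h2⟩
          exact hc (Prod.ext h1.symm (by simp [h2]))
        have hchain : ((V' ++ [v]) ++ (u :: U')).Chain' NC := by
          rw [List.chain'_append]
          refine ⟨hV, hU, ?_⟩
          intro a ha b hb
          simp at ha hb
          subst ha; subst hb
          exact hjunction
        exact ⟨V' ++ [v], [], u :: U', by simp [FreeGroup.invRev],
          by simp [FreeGroup.invRev], hchain, reduce_eq_of_chain' hchain⟩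

/-- Multiplication of free group elements on the level of reduced words. -/
theorem toWord_mul_spec (x y : FreeGroup α) : ∃ p c s,
    x.toWord = p ++ c ∧ y.toWord = FreeGroup.invRev c ++ s ∧ (x * y).toWord = p ++ s := by
  obtain ⟨p, c, s, h1, h2, _, h4⟩ :=
    cancel_spec x.toWord y.toWord (chain'_toWord x) (chain'_toWord y)
  refine ⟨p, c, s, h1, h2, ?_⟩
  conv_lhs => rw [← FreeGroup.mk_toWord (x := x), ← FreeGroup.mk_toWord (x := y)]
  rw [FreeGroup.mul_mk, FreeGroup.toWord_mk, h4]


theorem invRev_append {β : Type*} (L₁ L₂ : List (β × Bool)) :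
    FreeGroup.invRev (L₁ ++ L₂) = FreeGroup.invRev L₂ ++ FreeGroup.invRev L₁ := by
  simp [FreeGroup.invRev]

theorem take_append_of_le {β : Type*} {n : ℕ} {l₁ l₂ : List β} (h : n ≤ l₁.length) :
    (l₁ ++ l₂).take n = l₁.take n := by
  rw [List.take_append, Nat.sub_eq_zero_of_le h]
  simp

end Reduced

/-- words with constant sign are reduced -/
theorem chain'_of_const_snd {α : Type*} {δ : Bool} :
    ∀ {L : List (α × Bool)}, (∀ p ∈ L, p.2 = δ) → L.Chain' NC := by
  intro L
  induction L with
  | nil => intro _; simp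
  | cons a L ih =>
    intro h
    refine List.chain'_cons'.mpr ⟨?_, ih fun p hp => h p (List.mem_cons_of_mem _ hp)⟩
    intro b hb
    have hbL : b ∈ L := List.mem_of_mem_head? hb
    have h1 : a.2 = δ := h a (List.mem_cons_self)
    have h2 : b.2 = δ := h b (List.mem_cons_of_mem _ hbL)
    intro ⟨_, hc⟩
    rw [h1, h2] at hc
    simp at hc

section Words

variable (kk mm : ℕ)

/-- the "half word" `x y^(2m+2) x y^(2m+3)`, all letters with sign `δ`. -/
def hwd (δ : Bool) : List (Fin (kk+2) × Bool) :=
  (0, δ) :: (List.replicate (2*mm+2) ((1 : Fin (kk+2)), δ) ++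
    ((0, δ) :: List.replicate (2*mm+3) ((1 : Fin (kk+2)), δ)))

/-- the word `x y^(2m+2) x y^(2m+3) x y^(2m+3) x y^(2m+2) x`, a palindrome. -/
def wrd (δ : Bool) : List (Fin (kk+2) × Bool) :=
  hwd kk mm δ ++ ((0, δ) :: (List.replicate (2*mm+3) ((1 : Fin (kk+2)), δ) ++
    ((0, δ) :: (List.replicate (2*mm+2) ((1 : Fin (kk+2)), δ) ++ [(0, δ)]))))

variable {kk mm}

theorem hwd_length (δ : Bool) : (hwd kk mm δ).length = 4*mm+7 := by
  simp [hwd]; omega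

theorem wrd_length (δ : Bool) : (wrd kk mm δ).length = 8*mm+15 := by
  simp [wrd, hwd]; omega

theorem mem_hwd_snd (δ : Bool) : ∀ p ∈ hwd kk mm δ, p.2 = δ := by
  intro p hp
  simp [hwd, List.mem_replicate] at hp
  rcases hp with h | h | h | h <;> simp [h]

theorem mem_wrd_snd (δ : Bool) : ∀ p ∈ wrd kk mm δ, p.2 = δ := by
  intro p hp
  simp only [wrd, List.mem_append, List.mem_cons, List.mem_replicate, List.mem_singleton] at hp
  rcases hp with h | h | h | h | h | (h | h)
  · exact mem_hwd_snd δ p h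
  · simp [h]
  · simp [h.2]
  · simp [h]
  · simp [h.2]
  · simp [h]
  · simp at h

theorem chain'_hwd (δ : Bool) : (hwd kk mm δ).Chain' NC :=
  chain'_of_const_snd (mem_hwd_snd δ)

theorem chain'_wrd (δ : Bool) : (wrd kk mm δ).Chain' NC :=
  chain'_of_const_snd (mem_wrd_snd δ)

theorem take_wrd (δ : Bool) : (wrd kk mm δ).take (4*mm+7) = hwd kk mm δ := by
  rw [wrd, ← hwd_length (kk := kk) (mm := mm) δ, List.take_left]

theorem invRev_wrd (δ : Bool) : FreeGroup.invRev (wrd kk mm δ) = wrd kk mm (!δ) := by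
  simp only [wrd, hwd, FreeGroup.invRev, List.map_append, List.map_cons, List.map_replicate,
    List.map_nil, List.reverse_append, List.reverse_cons, List.reverse_replicate,
    List.reverse_nil, List.append_assoc, List.nil_append, List.cons_append, List.singleton_append]

theorem hwd_get_x (δ : Bool) (q : ℕ) (hq : q = 2*mm+3) (h : q < (hwd kk mm δ).length) :
    (hwd kk mm δ)[q] = ((0 : Fin (kk+2)), δ) := by
  subst hq
  rw [List.getElem_eq_iff]
  rw [show hwd kk mm δ = ((0, δ) :: List.replicate (2*mm+2) ((1 : Fin (kk+2)), δ)) ++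
      ((0, δ) :: List.replicate (2*mm+3) ((1 : Fin (kk+2)), δ)) from by simp [hwd]]
  rw [List.getElem?_append_right (by simp)]
  rw [show 2*mm+3 - (((0, δ) :: List.replicate (2*mm+2) ((1 : Fin (kk+2)), δ)).length) = 0
    from by simp]
  simp

theorem hwd_get_y (δ : Bool) (q : ℕ) (h1 : 1 ≤ q) (h2 : q ≤ 2*mm+2)
    (h : q < (hwd kk mm δ).length) :
    (hwd kk mm δ)[q] = ((1 : Fin (kk+2)), δ) := by
  obtain ⟨q', rfl⟩ : ∃ q', q = q' + 1 := ⟨q - 1, by omega⟩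
  rw [List.getElem_eq_iff]
  rw [show hwd kk mm δ = (0, δ) :: (List.replicate (2*mm+2) ((1 : Fin (kk+2)), δ) ++
      ((0, δ) :: List.replicate (2*mm+3) ((1 : Fin (kk+2)), δ))) from rfl]
  rw [List.getElem?_cons_succ, List.getElem?_append_left (by simp; omega),
    List.getElem?_replicate, if_pos (by omega)]

theorem hwd_get_snd (δ : Bool) (q : ℕ) (h : q < (hwd kk mm δ).length) :
    ((hwd kk mm δ)[q]).2 = δ :=
  mem_hwd_snd δ _ (List.getElem_mem h)

/-- The rigidity of the half-word `hwd` under small shifts. -/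
theorem core {K j : ℕ} {δ δ' : Bool} (hk : K ≤ 2*mm) (hj : j ≤ 2*mm)
    (heq : ∀ i (h1 : K + i < (hwd kk mm δ').length) (h2 : j + i < (hwd kk mm δ).length),
      (hwd kk mm δ')[K+i] = (hwd kk mm δ)[j+i]) : δ = δ' ∧ K = j := by
  have hlen : ∀ δ'' : Bool, (hwd kk mm δ'').length = 4*mm+7 := fun _ => hwd_length _
  have hδ : δ = δ' := by
    have h0 := heq 0 (by rw [hlen]; omega) (by rw [hlen]; omega)
    have := congrArg Prod.snd h0
    rw [hwd_get_snd, hwd_get_snd] at this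
    exact this.symm
  refine ⟨hδ, ?_⟩
  rcases lt_trichotomy K j with h | h | h
  · exfalso
    have hb1 : K + (2*mm+3-j) < (hwd kk mm δ').length := by rw [hlen]; omega
    have hb2 : j + (2*mm+3-j) < (hwd kk mm δ).length := by rw [hlen]; omega
    have := heq (2*mm+3-j) hb1 hb2
    rw [hwd_get_y δ' _ (by omega) (by omega), hwd_get_x δ _ (by omega)] at this
    simp only [Prod.mk.injEq] at this
    have := congrArg Fin.val this.1
    simp [Fin.val_one] at this
  · exact h
  · exfalso
    have hb1 : K + (2*mm+3-K) < (hwd kk mm δ').length := by rw [hlen]; omega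
    have hb2 : j + (2*mm+3-K) < (hwd kk mm δ).length := by rw [hlen]; omega
    have := heq (2*mm+3-K) hb1 hb2
    rw [hwd_get_x δ' _ (by omega), hwd_get_y δ _ (by omega) (by omega)] at this
    simp only [Prod.mk.injEq] at this
    have := congrArg Fin.val this.1
    simp [Fin.val_one] at this

end Words
section Step

/-- The long word `w` (or its inverse, according to `δ`) as a free group element. -/
noncomputable def wel (kk mm : ℕ) (δ : Bool) : FreeGroup (Fin (kk+2)) := FreeGroup.mk (wrd kk mm δ)

theorem toWord_wel (δ : Bool) : (wel kk mm δ).toWord = wrd kk mm δ := by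
  rw [wel, FreeGroup.toWord_mk, reduce_eq_of_chain' (chain'_wrd δ)]

theorem wel_inv (δ : Bool) : (wel kk mm δ)⁻¹ = wel kk mm (!δ) := by
  rw [wel, wel, FreeGroup.inv_mk, invRev_wrd]

/-- Ping-pong step: if the reduced word of `u` does not start with the half-word of sign `!δ`,
then the reduced word of `w^δ * u` starts with the half-word of sign `δ`. -/
theorem step_lemma (u : FreeGroup (Fin (kk+2))) (δ : Bool)
    (hu : ¬ (hwd kk mm (!δ) <+: u.toWord)) :
    hwd kk mm δ <+: (wel kk mm δ * u).toWord := by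
  obtain ⟨p, c, s, h1, h2, h3⟩ := toWord_mul_spec (wel kk mm δ) u
  rw [toWord_wel] at h1
  have hrev : wrd kk mm (!δ) = FreeGroup.invRev c ++ FreeGroup.invRev p := by
    rw [← invRev_wrd δ, h1, invRev_append]
  by_cases hlen : 4*mm+7 ≤ c.length
  · exfalso
    apply hu
    have h4 : hwd kk mm (!δ) <+: FreeGroup.invRev c := by
      have h5 : (wrd kk mm (!δ)).take (4*mm+7) = (FreeGroup.invRev c).take (4*mm+7) := by
        rw [hrev, take_append_of_le (by rwa [FreeGroup.invRev_length])]
      rw [take_wrd] at h5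
      exact h5 ▸ List.take_prefix _ _
    exact h4.trans (h2 ▸ (List.prefix_append _ _))
  · have hplen : 4*mm+7 ≤ p.length := by
      have := congrArg List.length h1
      rw [wrd_length] at this
      simp only [List.length_append] at this
      omega
    have h4 : hwd kk mm δ <+: p := by
      have h5 : (wrd kk mm δ).take (4*mm+7) = p.take (4*mm+7) := by
        rw [h1, take_append_of_le hplen]
      rw [take_wrd] at h5
      exact h5 ▸ List.take_prefix _ _
    rw [h3]
    exact h4.trans (List.prefix_append _ _)

/-- Rigidity: a short element cannot move one half-word prefix to another. -/
theorem rigidity {e u : FreeGroup (Fin (kk+2))} {δ δ' : Bool} (he : e.toWord.length ≤ 2*mm)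
    (hu : hwd kk mm δ <+: u.toWord) (heu : hwd kk mm δ' <+: (e*u).toWord) : e = 1 := by
  obtain ⟨p, c, s, h1, h2, h3⟩ := toWord_mul_spec e u
  have hK : p.length + c.length ≤ 2*mm := by
    have := congrArg List.length h1
    simp only [List.length_append] at this
    omega
  have hlenH : ∀ δ'' : Bool, (hwd kk mm (δ'' : Bool)).length = 4*mm+7 := fun _ => hwd_length _
  have hulen : 4*mm+7 ≤ u.toWord.length := (hlenH δ) ▸ hu.length_le
  have heulen : 4*mm+7 ≤ (e*u).toWord.length := (hlenH δ') ▸ heu.length_le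
  have hslen : ∀ i, p.length + i < 4*mm+7 → i < s.length := by
    intro i hi
    have := congrArg List.length h3
    simp only [List.length_append] at this
    omega
  have hclen : c.length ≤ 2*mm := by omega
  have heq : ∀ i (hb1 : p.length + i < (hwd kk mm δ').length)
      (hb2 : c.length + i < (hwd kk mm δ).length),
      (hwd kk mm δ')[p.length + i] = (hwd kk mm δ)[c.length + i] := by
    intro i hb1 hb2
    rw [hlenH] at hb1 hb2
    have his : i < s.length := hslen i hb1
    have e1 : (hwd kk mm δ')[p.length + i]'(by rw [hlenH]; exact hb1)
        = ((e*u).toWord)[p.length + i]'(by omega) := heu.getElem _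
    have e2 : ((e*u).toWord)[p.length + i]'(by omega) = s[i] := by
      rw [List.getElem_of_eq h3 (by omega), List.getElem_append_right (by omega)]
      congr 1
      omega
    have e3 : (u.toWord)[c.length + i]'(by omega) = s[i] := by
      rw [List.getElem_of_eq h2 (by omega),
        List.getElem_append_right (by rw [FreeGroup.invRev_length]; omega)]
      congr 1
      rw [FreeGroup.invRev_length]
      omega
    have e4 : (hwd kk mm δ)[c.length + i]'(by rw [hlenH]; exact hb2)
        = (u.toWord)[c.length + i]'(by omega) := hu.getElem _
    rw [e1, e2, ← e3, ← e4]
  obtain ⟨hδ, hKj⟩ := core (by omega) hclen heq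
  subst hδ
  -- now show p.length = 0
  rcases Nat.eq_zero_or_pos p.length with hz | hpos
  · have hc0 : c.length = 0 := by omega
    have : e.toWord = [] := by
      rw [h1, List.length_eq_zero_iff.mp hz, List.length_eq_zero_iff.mp hc0]
      rfl
    rwa [FreeGroup.toWord_eq_nil_iff] at this
  · exfalso
    -- p is a prefix of hwd δ, invRev c is a prefix of hwd δ; junction breaks reducedness
    set K := p.length with hKdef
    have hp_pref : p <+: hwd kk mm δ := by
      apply List.prefix_of_prefix_length_le _ heu (by rw [hlenH]; omega)
      exact h3 ▸ List.prefix_append _ _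
    have hc_pref : FreeGroup.invRev c <+: hwd kk mm δ := by
      apply List.prefix_of_prefix_length_le _ hu
        (by rw [hlenH, FreeGroup.invRev_length]; omega)
      exact h2 ▸ List.prefix_append _ _
    -- write p = p' ++ [a]
    have hpeq : p = (hwd kk mm δ).take K := List.prefix_iff_eq_take.mp hp_pref
    have hceq : FreeGroup.invRev c = (hwd kk mm δ).take K := by
      have h6 := List.prefix_iff_eq_take.mp hc_pref
      rw [FreeGroup.invRev_length, ← hKj] at h6
      exact h6
    have hKlt : K - 1 < (hwd kk mm δ).length := by rw [hlenH]; omega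
    set a := (hwd kk mm δ)[K-1] with hadef
    have hptake : p = (hwd kk mm δ).take (K-1) ++ [a] := by
      rw [hpeq, show K = (K-1)+1 by omega, List.take_succ, List.getElem?_eq_getElem hKlt]
      rfl
    have hcval : c = FreeGroup.invRev ((hwd kk mm δ).take (K-1) ++ [a]) := by
      rw [← hptake, hpeq, ← hceq, FreeGroup.invRev_invRev]
    have hchead : c = (a.1, !a.2) :: FreeGroup.invRev ((hwd kk mm δ).take (K-1)) := by
      rw [hcval, invRev_append]
      rfl
    -- contradiction with reducedness of e.toWord
    have hred : (p ++ c).Chain' NC := h1 ▸ chain'_toWord e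
    rw [hptake, hchead] at hred
    have := (List.chain'_append.mp hred).2.2 a (by simp) (a.1, !a.2) (by simp)
    exact this ⟨rfl, by simp⟩

end Step


theorem wel_eq_mk {kk mm : ℕ} (δ : Bool) : wel kk mm δ = FreeGroup.mk (wrd kk mm δ) := rfl


section Phi

variable (kk mm : ℕ)

/-- the lowering map on letters -/
def lo (p : Fin (kk+3) × Bool) : Fin (kk+2) × Bool :=
  (if h : (p.1 : ℕ) < kk+2 then ⟨p.1, h⟩ else ⟨0, by omega⟩, p.2)

/-- The retraction `F_{n+1} → F_n` sending the last generator to the long word `w`. -/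
noncomputable def phi : FreeGroup (Fin (kk+3)) →* FreeGroup (Fin (kk+2)) :=
  FreeGroup.lift (fun i => if h : (i : ℕ) < kk+2 then FreeGroup.of ⟨i, h⟩ else wel kk mm true)

variable {kk mm}

theorem phi_of_low (i : Fin (kk+3)) (h : (i : ℕ) < kk+2) :
    phi kk mm (FreeGroup.of i) = FreeGroup.of ⟨i, h⟩ := by
  rw [phi, FreeGroup.lift_apply_of, dif_pos h]

theorem phi_of_top : phi kk mm (FreeGroup.of (Fin.last (kk+2))) = wel kk mm true := by
  rw [phi, FreeGroup.lift_apply_of, dif_neg (by simp)]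

theorem mk_singleton_true (α : Type*) (a : α) : FreeGroup.mk [(a, true)] = FreeGroup.of a := rfl

theorem mk_singleton_false (α : Type*) (a : α) :
    FreeGroup.mk [(a, false)] = (FreeGroup.of a)⁻¹ := by
  rw [← mk_singleton_true, FreeGroup.inv_mk]
  rfl

theorem phi_mk_singleton (δ : Bool) :
    phi kk mm (FreeGroup.mk [(Fin.last (kk+2), δ)]) = wel kk mm δ := by
  cases δ
  · rw [mk_singleton_false, _root_.map_inv, phi_of_top, wel_inv]
    rfl
  · rw [mk_singleton_true, phi_of_top]

theorem phi_mk_low : ∀ (L : List (Fin (kk+3) × Bool)), (∀ p ∈ L, (p.1 : ℕ) < kk+2) →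
    phi kk mm (FreeGroup.mk L) = FreeGroup.mk (L.map (lo kk)) := by
  intro L
  induction L with
  | nil =>
    intro _
    rw [← FreeGroup.one_eq_mk, _root_.map_one, List.map_nil, FreeGroup.one_eq_mk]
  | cons p L ih =>
    intro h
    have hp : (p.1 : ℕ) < kk+2 := h p (List.mem_cons_self)
    have h1 : FreeGroup.mk (p :: L) = FreeGroup.mk [p] * FreeGroup.mk L := by
      rw [FreeGroup.mul_mk]; rfl
    have h2 : FreeGroup.mk ((p :: L).map (lo kk)) =
        FreeGroup.mk [lo kk p] * FreeGroup.mk (L.map (lo kk)) := by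
      rw [FreeGroup.mul_mk]; rfl
    rw [h1, h2, _root_.map_mul, ih (fun q hq => h q (List.mem_cons_of_mem _ hq))]
    congr 1
    obtain ⟨i, b⟩ := p
    cases b
    · rw [mk_singleton_false, _root_.map_inv, phi_of_low i hp]
      rw [show lo kk (i, false) = (⟨(i:ℕ), hp⟩, false) from by simp [lo, hp]]
      rw [mk_singleton_false]
    · rw [mk_singleton_true, phi_of_low i hp]
      rw [show lo kk (i, true) = (⟨(i:ℕ), hp⟩, true) from by simp [lo, hp]]
      rw [mk_singleton_true]

theorem chain'_map_lo : ∀ (L : List (Fin (kk+3) × Bool)), (∀ p ∈ L, (p.1 : ℕ) < kk+2) →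
    L.Chain' NC → (L.map (lo kk)).Chain' NC := by
  intro L
  induction L with
  | nil => intro _ _; simp
  | cons a L ih =>
    intro hmem hch
    cases L with
    | nil => simp
    | cons b L' =>
      rw [List.map_cons, List.map_cons, List.chain'_cons]
      constructor
      · have hNC : NC a b := (List.chain'_cons.mp hch).1
        have ha : (a.1 : ℕ) < kk+2 := hmem a (by simp)
        have hb : (b.1 : ℕ) < kk+2 := hmem b (by simp)
        intro ⟨hfst, hsnd⟩
        apply hNC
        refine ⟨?_, by simpa [lo] using hsnd⟩
        simp only [lo, dif_pos ha, dif_pos hb] at hfst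
        have := congrArg Fin.val hfst
        simp at this
        exact Fin.ext this
      · rw [← List.map_cons]
        exact ih (fun q hq => hmem q (List.mem_cons_of_mem _ hq)) (List.chain'_cons.mp hch).2

theorem toWord_phi_mk_low (L : List (Fin (kk+3) × Bool)) (h : ∀ p ∈ L, (p.1 : ℕ) < kk+2)
    (hch : L.Chain' NC) : (phi kk mm (FreeGroup.mk L)).toWord = L.map (lo kk) := by
  rw [phi_mk_low L h, FreeGroup.toWord_mk, reduce_eq_of_chain' (chain'_map_lo L h hch)]

/-- helper about dropWhile -/
theorem dropWhile_head_false {α : Type*} (P : α → Bool) :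
    ∀ (l : List α) (q : α) (t : List α), l.dropWhile P = q :: t → P q = false := by
  intro l
  induction l with
  | nil => intro q t h; simp at h
  | cons a l ih =>
    intro q t h
    rw [List.dropWhile_cons] at h
    by_cases hPa : P a = true
    · rw [if_pos hPa] at h
      exact ih q t h
    · rw [if_neg hPa] at h
      injection h with h1 _
      rw [← h1]
      simpa using hPa

/-- The main ping-pong induction. -/
theorem claim : ∀ (N : ℕ) (L : List (Fin (kk+3) × Bool)), L.length ≤ N → L.length ≤ 2*mm →
    L.Chain' NC → ∀ (δ : Bool) (rest : List (Fin (kk+3) × Bool)),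
    L = (Fin.last (kk+2), δ) :: rest →
    hwd kk mm δ <+: (phi kk mm (FreeGroup.mk L)).toWord := by
  intro N
  induction N with
  | zero =>
    intro L hN _ _ δ rest hL
    rw [hL] at hN
    simp at hN
  | succ N ih =>
    intro L hN hlen hch δ L' hL
    subst hL
    set P : Fin (kk+3) × Bool → Bool := fun q => decide ((q.1 : ℕ) < kk+2) with hP
    set ℓ := L'.takeWhile P with hℓ
    set rest := L'.dropWhile P with hrest
    have htd : ℓ ++ rest = L' := List.takeWhile_append_dropWhile
    have hlow : ∀ p ∈ ℓ, (p.1 : ℕ) < kk+2 := by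
      intro p hp
      have := List.mem_takeWhile_imp hp
      simpa [hP] using this
    have hchL' : L'.Chain' NC := (List.chain'_cons'.mp hch).2
    have hch2 : ℓ.Chain' NC ∧ rest.Chain' NC := by
      rw [← htd] at hchL'
      have := List.chain'_append.mp hchL'
      exact ⟨this.1, this.2.1⟩
    have hℓlen : ℓ.length ≤ 2*mm := by
      have h1 : ℓ.length ≤ L'.length := by
        rw [← htd]; simp
      simp at hlen
      omega
    have hsplit : FreeGroup.mk ((Fin.last (kk+2), δ) :: L') =
        FreeGroup.mk [(Fin.last (kk+2), δ)] * (FreeGroup.mk ℓ * FreeGroup.mk rest) := by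
      rw [FreeGroup.mul_mk, FreeGroup.mul_mk, htd]
      rfl
    rw [hsplit, _root_.map_mul, _root_.map_mul, phi_mk_singleton]
    set g := phi kk mm (FreeGroup.mk ℓ) with hg
    set u := phi kk mm (FreeGroup.mk rest) with hu
    have hgword : g.toWord = ℓ.map (lo kk) := toWord_phi_mk_low ℓ hlow hch2.1
    apply step_lemma
    -- goal: ¬ hwd (!δ) <+: (g * u).toWord
    cases hre : rest with
    | nil =>
      rw [hre] at hu
      have hu1 : u = 1 := by rw [hu, ← FreeGroup.one_eq_mk, _root_.map_one]
      rw [hu1, mul_one]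
      intro hpref
      have := hpref.length_le
      rw [hwd_length, hgword] at this
      simp at this
      omega
    | cons q rest' =>
      have hqtop : q.1 = Fin.last (kk+2) := by
        have := dropWhile_head_false P L' q rest' (hrest ▸ hre)
        simp [hP] at this
        have hle : (q.1 : ℕ) ≤ kk+2 := Nat.lt_succ_iff.mp q.1.isLt
        exact Fin.ext (by rw [Fin.val_last]; omega)
      have hq : q = (Fin.last (kk+2), q.2) := by rw [← hqtop]
      have hIH : hwd kk mm q.2 <+: u.toWord := by
        rw [hu, hre]
        apply ih (q :: rest') _ _ _ q.2 rest' (by rw [← hq])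
        · have : rest.length ≤ L'.length := by rw [← htd]; simp
          rw [hre] at this
          simp at hN
          omega
        · have : rest.length ≤ L'.length := by rw [← htd]; simp
          rw [hre] at this
          simp at hlen
          omega
        · rw [← hre]; exact hch2.2
      cases hℓe : ℓ with
      | nil =>
        have hg1 : g = 1 := by rw [hg, hℓe, ← FreeGroup.one_eq_mk, _root_.map_one]
        rw [hg1, one_mul]
        -- adjacency: δ and q.2
        have hadj : NC (Fin.last (kk+2), δ) q := by
          have : L' = q :: rest' := by rw [← htd, hℓe, hre]; rfl
          rw [this] at hch
          exact (List.chain'_cons.mp hch).1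
        have hδq : ¬(δ = !q.2) := by
          intro hc
          exact hadj ⟨by rw [hqtop], hc⟩
        intro hpref
        -- hwd (!δ) and hwd q.2 both prefixes of u.toWord, same length
        have heq : hwd kk mm (!δ) = hwd kk mm q.2 := by
          have h1 := List.prefix_iff_eq_take.mp hpref
          have h2 := List.prefix_iff_eq_take.mp hIH
          rw [h1, h2, hwd_length, hwd_length]
        have h0 : (0:ℕ) < (hwd kk mm (!δ)).length := by rw [hwd_length]; omega
        have := congrArg (fun l : List (Fin (kk+2) × Bool) => l[0]?) heq
        simp only [List.getElem?_eq_getElem h0,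
          List.getElem?_eq_getElem (by rw [hwd_length]; omega :
            (0:ℕ) < (hwd kk mm q.2).length)] at this
        have hsnd := congrArg (fun o : Option (Fin (kk+2) × Bool) =>
          (o.getD ((0 : Fin (kk+2)), true)).2) this
        simp only [Option.getD_some] at hsnd
        rw [hwd_get_snd, hwd_get_snd] at hsnd
        apply hδq
        rw [← hsnd, Bool.not_not]
      | cons p ℓ' =>
        intro hpref
        have hgne : g ≠ 1 := by
          intro hc
          have : g.toWord = [] := by rw [hc, FreeGroup.toWord_one]
          rw [hgword, hℓe] at this
          simp at this
        exact hgne (rigidity (by rw [hgword]; simpa using hℓlen) hIH hpref)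

/-- The key injectivity statement: short elements of the kernel of `phi` are trivial. -/
theorem main_lemma (R : FreeGroup (Fin (kk+3))) (hlen : R.toWord.length ≤ 2*mm)
    (h1 : phi kk mm R = 1) : R = 1 := by
  set L := R.toWord with hLdef
  have hR : R = FreeGroup.mk L := (FreeGroup.mk_toWord).symm
  have hch : L.Chain' NC := chain'_toWord R
  set P : Fin (kk+3) × Bool → Bool := fun q => decide ((q.1 : ℕ) < kk+2) with hP
  set ℓ := L.takeWhile P with hℓ
  set rest := L.dropWhile P with hrest
  have htd : ℓ ++ rest = L := List.takeWhile_append_dropWhile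
  have hlow : ∀ p ∈ ℓ, (p.1 : ℕ) < kk+2 := by
    intro p hp
    have := List.mem_takeWhile_imp hp
    simpa [hP] using this
  have hch2 : ℓ.Chain' NC ∧ rest.Chain' NC := by
    rw [← htd] at hch
    have := List.chain'_append.mp hch
    exact ⟨this.1, this.2.1⟩
  have hsplit : R = FreeGroup.mk ℓ * FreeGroup.mk rest := by
    rw [FreeGroup.mul_mk, htd, ← hR]
  cases hre : rest with
  | nil =>
    have hLl : L = ℓ := by rw [← htd, hre]; simp
    rw [hR, hLl, phi_mk_low ℓ hlow] at h1
    have h2 : (ℓ.map (lo kk)) = [] := by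
      have h3 : (FreeGroup.mk (ℓ.map (lo kk))).toWord = [] := by
        rw [h1, FreeGroup.toWord_one]
      rwa [FreeGroup.toWord_mk, reduce_eq_of_chain' (chain'_map_lo ℓ hlow hch2.1)] at h3
    have h4 : ℓ = [] := by
      have := congrArg List.length h2
      simpa using this
    rw [hR, hLl, h4, ← FreeGroup.one_eq_mk]
  | cons q rest' =>
    exfalso
    have hqtop : q.1 = Fin.last (kk+2) := by
      have := dropWhile_head_false P L q rest' (hrest ▸ hre)
      simp [hP] at this
      have hle : (q.1 : ℕ) ≤ kk+2 := Nat.lt_succ_iff.mp q.1.isLt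
      exact Fin.ext (by rw [Fin.val_last]; omega)
    have hrlen : rest.length ≤ 2*mm := by
      have : rest.length ≤ L.length := by rw [← htd]; simp
      omega
    have hpref : hwd kk mm q.2 <+: (phi kk mm (FreeGroup.mk rest)).toWord := by
      rw [hre]
      apply claim (2*mm) (q :: rest') (hre ▸ hrlen) (hre ▸ hrlen) (hre ▸ hch2.2) q.2 rest'
      rw [show q = (Fin.last (kk+2), q.2) from by rw [← hqtop]]
    have hglen : (phi kk mm (FreeGroup.mk ℓ)).toWord.length ≤ 2*mm := by
      rw [toWord_phi_mk_low ℓ hlow hch2.1]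
      have h5 : ℓ.length ≤ L.length := by rw [← htd]; simp
      simp
      omega
    rw [hsplit, _root_.map_mul] at h1
    have hinv : phi kk mm (FreeGroup.mk rest) = (phi kk mm (FreeGroup.mk ℓ))⁻¹ :=
      (inv_eq_of_mul_eq_one_right h1).symm
    have hlenu : 4*mm+7 ≤ (phi kk mm (FreeGroup.mk rest)).toWord.length := by
      have := hpref.length_le
      rwa [hwd_length] at this
    rw [hinv, FreeGroup.toWord_inv, FreeGroup.invRev_length] at hlenu
    omega

end Phi

section WordBall

variable {G : Type*} [Group G] {T : Set G}

theorem wordBall_mono {r r' : ℝ} (h : r ≤ r') : wordBall T r ⊆ wordBall T r' := by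
  rintro g ⟨l, hl, hT, hp⟩
  exact ⟨l, hl.trans h, hT, hp⟩

theorem one_mem_wordBall {r : ℝ} (h : 0 ≤ r) : (1:G) ∈ wordBall T r :=
  ⟨[], by simpa, by simp, rfl⟩

theorem mul_mem_wordBall {a b : G} {r r' : ℝ} (ha : a ∈ wordBall T r)
    (hb : b ∈ wordBall T r') : a * b ∈ wordBall T (r + r') := by
  obtain ⟨l, hl, hT, rfl⟩ := ha
  obtain ⟨l', hl', hT', rfl⟩ := hb
  refine ⟨l ++ l', ?_, ?_, by rw [List.prod_append]⟩
  · push_cast [List.length_append]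
    linarith
  · intro x hx
    exact (List.mem_append.mp hx).elim (hT x) (hT' x)

theorem inv_mem_wordBall {a : G} {r : ℝ} (ha : a ∈ wordBall T r) : a⁻¹ ∈ wordBall T r := by
  obtain ⟨l, hl, hT, rfl⟩ := ha
  refine ⟨(l.map (·⁻¹)).reverse, by simpa using hl, ?_, (List.prod_inv_reverse l).symm⟩
  intro x hx
  simp only [List.mem_reverse, List.mem_map] at hx
  obtain ⟨y, hy, rfl⟩ := hx
  rcases hT y hy with h | h
  · right
    simpa using h
  · left
    exact h

theorem list_prod_mem_wordBall {ρ : ℝ} :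
    ∀ (l : List G), (∀ x ∈ l, x ∈ wordBall T ρ) → l.prod ∈ wordBall T (l.length * ρ) := by
  intro l
  induction l with
  | nil =>
    intro _
    simpa using one_mem_wordBall le_rfl
  | cons a l ih =>
    intro h
    rw [List.prod_cons]
    have h2 := mul_mem_wordBall (h a (by simp)) (ih fun x hx => h x (by simp [hx]))
    refine wordBall_mono (le_of_eq ?_) h2
    simp only [List.length_cons]
    push_cast
    ring

end WordBall

section FGBall

theorem mk_eq_prod {α : Type*} (L : List (α × Bool)) : FreeGroup.mk L =
    (L.map fun x => cond x.2 (FreeGroup.of x.1) (FreeGroup.of x.1)⁻¹).prod := by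
  conv_lhs => rw [← FreeGroup.lift_of_apply (FreeGroup.mk L)]
  rw [FreeGroup.lift_mk]

theorem mk_mem_wordBall {α : Type*} (L : List (α × Bool)) {r : ℝ} (hr : (L.length : ℝ) ≤ r) :
    FreeGroup.mk L ∈ wordBall (Set.range (FreeGroup.of : α → FreeGroup α)) r := by
  refine ⟨L.map fun x => cond x.2 (FreeGroup.of x.1) (FreeGroup.of x.1)⁻¹,
    by simpa using hr, ?_, (mk_eq_prod L).symm⟩
  intro x hx
  simp only [List.mem_map] at hx
  obtain ⟨⟨i, b⟩, _, rfl⟩ := hx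
  cases b
  · right
    simp
  · left
    simp

theorem prod_toWord_len {α : Type*} [DecidableEq α] :
    ∀ (ls : List (FreeGroup α)), (∀ x ∈ ls, x.toWord.length ≤ 1) →
      ls.prod.toWord.length ≤ ls.length := by
  intro ls
  induction ls with
  | nil =>
    intro _
    simp [FreeGroup.toWord_one]
  | cons a ls ih =>
    intro h
    rw [List.prod_cons]
    calc (a * ls.prod).toWord.length ≤ a.toWord.length + ls.prod.toWord.length := by
          have := (FreeGroup.toWord_mul_sublist a ls.prod).length_le
          simpa using this
      _ ≤ 1 + ls.length := by
          have h1 := h a (by simp)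
          have h2 := ih fun x hx => h x (by simp [hx])
          omega
      _ = (a :: ls).length := by
          simp [Nat.add_comm]

end FGBall

section Glue

variable (kk mm : ℕ)

noncomputable def theta : Coprod (FreeGroup (Fin (kk+2))) (Multiplicative ℤ) →*
    FreeGroup (Fin (kk+3)) :=
  Coprod.lift (FreeGroup.map Fin.castSucc)
    (zpowersHom _ (FreeGroup.of (Fin.last (kk+2))))

noncomputable def psi : FreeGroup (Fin (kk+3)) →*
    Coprod (FreeGroup (Fin (kk+2))) (Multiplicative ℤ) :=
  FreeGroup.lift (fun i => if h : (i : ℕ) < kk+2 then Coprod.inl (FreeGroup.of ⟨i, h⟩)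
    else Coprod.inr (Multiplicative.ofAdd (1:ℤ)))

variable {kk mm}

theorem theta_inl (g : FreeGroup (Fin (kk+2))) :
    theta kk (Coprod.inl g) = FreeGroup.map Fin.castSucc g :=
  Coprod.lift_apply_inl _ _ g

theorem theta_inr : theta kk (Coprod.inr (Multiplicative.ofAdd (1:ℤ))) =
    FreeGroup.of (Fin.last (kk+2)) := by
  rw [theta, Coprod.lift_apply_inr, zpowersHom_apply]
  simp

theorem psi_theta (z : Coprod (FreeGroup (Fin (kk+2))) (Multiplicative ℤ)) :
    psi kk (theta kk z) = z := by
  have h : (psi kk).comp (theta kk) = MonoidHom.id _ := by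
    apply Coprod.hom_ext
    · apply FreeGroup.ext_hom
      intro i
      simp only [MonoidHom.comp_apply, MonoidHom.id_apply]
      rw [theta_inl, FreeGroup.map.of, psi, FreeGroup.lift_apply_of,
        dif_pos (show ((Fin.castSucc i : Fin (kk+3)) : ℕ) < kk+2 from by
          simpa using i.isLt)]
      simp
    · apply MonoidHom.ext_mint
      simp only [MonoidHom.comp_apply, MonoidHom.id_apply]
      rw [theta_inr, psi, FreeGroup.lift_apply_of, dif_neg (by simp)]
  exact DFunLike.congr_fun h z

theorem phih_inl (g : FreeGroup (Fin (kk+2))) :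
    ((phi kk mm).comp (theta kk)) (Coprod.inl g) = g := by
  have h : ((phi kk mm).comp (theta kk)).comp Coprod.inl =
      MonoidHom.id (FreeGroup (Fin (kk+2))) := by
    apply FreeGroup.ext_hom
    intro i
    simp only [MonoidHom.comp_apply, MonoidHom.id_apply]
    rw [theta_inl, FreeGroup.map.of, phi_of_low _ (by simpa using i.isLt)]
    apply congrArg FreeGroup.of
    apply Fin.ext
    simp
  exact DFunLike.congr_fun h g

/-- the generating set of the free product -/
def Sset (kk : ℕ) : Set (Coprod (FreeGroup (Fin (kk+2))) (Multiplicative ℤ)) :=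
  (⇑(Coprod.inl : FreeGroup (Fin (kk+2)) →* Coprod (FreeGroup (Fin (kk+2))) (Multiplicative ℤ)))
      '' Set.range (FreeGroup.of : Fin (kk+2) → FreeGroup (Fin (kk+2))) ∪
    {Coprod.inr (Multiplicative.ofAdd (1 : ℤ))}

theorem theta_letter {x : Coprod (FreeGroup (Fin (kk+2))) (Multiplicative ℤ)}
    (hx : x ∈ Sset kk ∨ x⁻¹ ∈ Sset kk) : (theta kk x).toWord.length ≤ 1 := by
  have key : ∀ y : Coprod (FreeGroup (Fin (kk+2))) (Multiplicative ℤ), y ∈ Sset kk →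
      (theta kk y).toWord.length ≤ 1 := by
    intro y hy
    rcases hy with ⟨g, ⟨i, rfl⟩, rfl⟩ | hy
    · rw [theta_inl, FreeGroup.map.of, FreeGroup.toWord_of]
      simp
    · rw [Set.mem_singleton_iff] at hy
      subst hy
      rw [theta_inr, FreeGroup.toWord_of]
      simp
  rcases hx with hx | hx
  · exact key x hx
  · have h1 := key x⁻¹ hx
    have h2 : theta kk x = (theta kk x⁻¹)⁻¹ := by rw [_root_.map_inv, inv_inv]
    rw [h2, FreeGroup.toWord_inv, FreeGroup.invRev_length]
    exact h1

theorem theta_ball_len {z : Coprod (FreeGroup (Fin (kk+2))) (Multiplicative ℤ)}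
    (hz : z ∈ wordBall (Sset kk) (mm : ℝ)) : (theta kk z).toWord.length ≤ mm := by
  obtain ⟨l, hl, hT, rfl⟩ := hz
  have hlen : l.length ≤ mm := by exact_mod_cast hl
  rw [map_list_prod]
  calc ((l.map (theta kk)).prod).toWord.length ≤ (l.map (theta kk)).length := by
        apply prod_toWord_len
        intro x hx
        simp only [List.mem_map] at hx
        obtain ⟨y, hy, rfl⟩ := hx
        exact theta_letter (hT y hy)
    _ ≤ mm := by simpa using hlen

theorem phih_letter {x : Coprod (FreeGroup (Fin (kk+2))) (Multiplicative ℤ)}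
    (hx : x ∈ Sset kk ∨ x⁻¹ ∈ Sset kk) :
    ((phi kk mm).comp (theta kk)) x ∈
      wordBall (Set.range (FreeGroup.of : Fin (kk+2) → FreeGroup (Fin (kk+2))))
        ((8*mm+15 : ℕ) : ℝ) := by
  have key : ∀ y, y ∈ Sset kk → ((phi kk mm).comp (theta kk)) y ∈
      wordBall (Set.range (FreeGroup.of : Fin (kk+2) → FreeGroup (Fin (kk+2))))
        ((8*mm+15 : ℕ) : ℝ) := by
    intro y hy
    rcases hy with ⟨g, ⟨i, rfl⟩, rfl⟩ | hy
    · rw [MonoidHom.comp_apply, theta_inl, FreeGroup.map.of, phi_of_low _ (by simpa using i.isLt)]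
      rw [← mk_singleton_true]
      apply mk_mem_wordBall
      have : ((1:ℕ) : ℝ) ≤ ((8*mm+15 : ℕ) : ℝ) := by exact_mod_cast (by omega : (1:ℕ) ≤ 8*mm+15)
      simpa using this
    · rw [Set.mem_singleton_iff] at hy
      subst hy
      rw [MonoidHom.comp_apply, theta_inr, phi_of_top, wel_eq_mk]
      apply mk_mem_wordBall
      rw [wrd_length]
  rcases hx with hx | hx
  · exact key x hx
  · have h1 := key x⁻¹ hx
    have h2 : ((phi kk mm).comp (theta kk)) x = (((phi kk mm).comp (theta kk)) x⁻¹)⁻¹ := by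
      rw [_root_.map_inv, inv_inv]
    rw [h2]
    exact inv_mem_wordBall h1

end Glue

section Liminf

theorem liminf_aux : Filter.liminf
    (fun m : ℕ => ((((m:ℝ))+1) * (8*(m:ℝ)+15)) ^ ((m : ℝ)⁻¹)) Filter.atTop = 1 := by
  apply Filter.Tendsto.liminf_eq
  have hupper : Filter.Tendsto (fun m : ℕ => ((m:ℝ)) ^ (3*((m:ℝ))⁻¹)) atTop (nhds 1) := by
    have h := tendsto_rpow_div_mul_add 3 1 0 (by norm_num)
    have h2 := h.comp (tendsto_natCast_atTop_atTop (R := ℝ))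
    apply h2.congr
    intro m
    simp [Function.comp, div_eq_mul_inv]
  apply tendsto_of_tendsto_of_tendsto_of_le_of_le' tendsto_const_nhds hupper
  · filter_upwards [Filter.eventually_ge_atTop 1] with m hm
    apply Real.one_le_rpow
    · nlinarith [Nat.cast_nonneg (α := ℝ) m]
    · positivity
  · filter_upwards [Filter.eventually_ge_atTop 11] with m hm
    have hm' : (11:ℝ) ≤ (m:ℝ) := by exact_mod_cast hm
    have h0 : (0:ℝ) ≤ (m:ℝ) := by positivity
    have hcube : ((m:ℝ))^(3:ℕ) = (m:ℝ)*(m:ℝ)*(m:ℝ) := by ring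
    have hfle : (((m:ℝ))+1) * (8*(m:ℝ)+15) ≤ ((m:ℝ))^(3:ℕ) := by
      rw [hcube]
      nlinarith [mul_nonneg (mul_nonneg h0 h0) (sub_nonneg.2 hm'),
        mul_nonneg h0 (sub_nonneg.2 hm')]
    calc ((((m:ℝ))+1) * (8*(m:ℝ)+15)) ^ ((m:ℝ)⁻¹)
        ≤ (((m:ℝ))^(3:ℕ)) ^ ((m:ℝ)⁻¹) := by
          apply Real.rpow_le_rpow (by positivity) hfle (by positivity)
      _ = ((m:ℝ)) ^ (3*((m:ℝ))⁻¹) := by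
          rw [← Real.rpow_natCast (m:ℝ) 3, ← Real.rpow_mul (by positivity)]
          norm_num

end Liminf

end Selfless

open Selfless in
/-- For every `n ≥ 2`, the free group `F_n` is selfless with respect to its standard
free generating set. -/
theorem freeGroup_isSelfless (n : ℕ) (hn : 2 ≤ n) :
    IsSelfless (FreeGroup (Fin n)) (Set.range (FreeGroup.of : Fin n → FreeGroup (Fin n))) := by
  obtain ⟨kk, rfl⟩ : ∃ kk, n = kk + 2 := ⟨n - 2, by omega⟩
  refine ⟨fun m => (((m:ℝ))+1) * (8*(m:ℝ)+15), ?_, liminf_aux, ?_⟩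
  · intro m
    positivity
  · intro m _
    refine ⟨(phi kk m).comp (theta kk), ?_, phih_inl, ?_, ?_⟩
    · intro g
      exact ⟨Coprod.inl g, phih_inl g⟩
    · -- injectivity on the ball
      intro u hu v hv huv
      have hU := theta_ball_len (mm := m) hu
      have hV := theta_ball_len (mm := m) hv
      have hR : phi kk m (theta kk u * (theta kk v)⁻¹) = 1 := by
        rw [_root_.map_mul, _root_.map_inv]
        have huv' : ((phi kk m).comp (theta kk)) u = ((phi kk m).comp (theta kk)) v := huv
        simp only [MonoidHom.comp_apply] at huv'
        rw [huv', mul_inv_cancel]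
      have hRlen : (theta kk u * (theta kk v)⁻¹).toWord.length ≤ 2*m := by
        have h1 := (FreeGroup.toWord_mul_sublist (theta kk u) (theta kk v)⁻¹).length_le
        rw [List.length_append, FreeGroup.toWord_inv, FreeGroup.invRev_length] at h1
        omega
      have hR1 := main_lemma (mm := m) _ hRlen hR
      have hTh : theta kk u = theta kk v := by
        rwa [mul_inv_eq_one] at hR1
      calc u = psi kk (theta kk u) := (psi_theta u).symm
        _ = psi kk (theta kk v) := by rw [hTh]
        _ = v := psi_theta v
    · -- image bound
      rintro y ⟨z, hz, rfl⟩
      obtain ⟨l, hl, hT, rfl⟩ := hz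
      have hlen : l.length ≤ m := by exact_mod_cast hl
      rw [map_list_prod]
      have hmem : ((l.map ((phi kk m).comp (theta kk))).prod) ∈
          wordBall (Set.range (FreeGroup.of : Fin (kk+2) → FreeGroup (Fin (kk+2))))
            ((l.map ((phi kk m).comp (theta kk))).length * ((8*m+15 : ℕ) : ℝ)) := by
        apply list_prod_mem_wordBall
        intro x hx
        simp only [List.mem_map] at hx
        obtain ⟨y, hy, rfl⟩ := hx
        exact phih_letter (hT y hy)
      refine wordBall_mono ?_ hmem
      simp only [List.length_map]
      push_cast
      nlinarith [hl, Nat.cast_nonneg (α := ℝ) l.length, Nat.cast_nonneg (α := ℝ) m]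
end

section
/- Let G and H be groups with subsets X ⊆ G and Y ⊆ H, let g ∈ G have infinite order, let n ≥ 1, and let h ∈ H satisfy h ∉ B_Y(2n). In the free product G ∗ H, equipped with the subset given by the images of X and Y, suppose m ≥ 2, s_1, …, s_m ∈ B_{X∪Y}(2n) with s_i ≠ 1 for all i with 1 < i < m, and p_1, …, p_{m−1} are nonzero integers. Then s_1·(h g^{p_1} h⁻¹)·s_2·(h g^{p_2} h⁻¹)⋯s_{m−1}·(h g^{p_{m−1}} h⁻¹)·s_m ≠ 1 in G ∗ H, where g and h denote the images of g and h in G ∗ H. -/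
open Filter Monoid

namespace FPAux

section WB

variable {K : Type*} [Group K] {T : Set K} {r r' : ℝ} {x y c : K}

lemma wb_mono (hr : r ≤ r') : wordBall T r ⊆ wordBall T r' := by
  rintro x ⟨l, hl, hl2, rfl⟩
  exact ⟨l, hl.trans hr, hl2, rfl⟩

lemma wb_one (hr : 0 ≤ r) : (1 : K) ∈ wordBall T r := ⟨[], by simpa, by simp, rfl⟩

lemma wb_inv (hx : x ∈ wordBall T r) : x⁻¹ ∈ wordBall T r := by
  obtain ⟨l, hl, hl2, rfl⟩ := hx
  refine ⟨(l.map (·⁻¹)).reverse, by simpa using hl, ?_, ?_⟩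
  · intro z hz
    simp only [List.mem_reverse, List.mem_map] at hz
    obtain ⟨a, ha, rfl⟩ := hz
    rcases hl2 a ha with h | h
    · exact Or.inr (by simpa using h)
    · exact Or.inl h
  · rw [← List.prod_inv_reverse]

lemma wb_single (hy : y ∈ T ∨ y⁻¹ ∈ T) (hr : 1 ≤ r) : y ∈ wordBall T r :=
  ⟨[y], by simpa, by simpa using hy, by simp⟩

lemma wb_cons (hy : y ∈ T ∨ y⁻¹ ∈ T) (hc : c ∈ wordBall T r) : y * c ∈ wordBall T (r + 1) := by
  obtain ⟨l, hl, hl2, rfl⟩ := hc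
  refine ⟨y :: l, ?_, ?_, by simp⟩
  · simp only [List.length_cons, Nat.cast_add, Nat.cast_one]
    linarith
  · intro z hz
    rcases List.mem_cons.1 hz with rfl | hz
    · exact hy
    · exact hl2 z hz

end WB

end FPAux

namespace FPAux
section WordComp

open Monoid.CoprodI Monoid.CoprodI.Word

variable {ι : Type*} {M : ι → Type*} [∀ i, Group (M i)] [DecidableEq ι]
  [∀ i, DecidableEq (M i)]

lemma smul_toList_cons {i : ι} (m : M i) (hm : m ≠ 1) (w : Word M)
    (hw : w.fstIdx ≠ some i) :
    (of m • w).toList = ⟨i, m⟩ :: w.toList := by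
  rw [← cons_eq_smul (h1 := hw) (h2 := hm)]
  rfl

/-- The tail of a word as a word. -/
def mkTail (w : Word M) (a : Σ i, M i) (t : List (Σ i, M i)) (h : w.toList = a :: t) :
    Word M where
  toList := t
  ne_one l hl := w.ne_one l (h ▸ List.mem_cons_of_mem _ hl)
  chain_ne := by
    have := w.chain_ne
    rw [h] at this
    exact this.tail

lemma mkTail_fstIdx (w : Word M) (a : Σ i, M i) (t : List (Σ i, M i))
    (h : w.toList = a :: t) : (mkTail w a t h).fstIdx ≠ some a.1 := by
  have hc := w.chain_ne
  rw [h, List.isChain_cons] at hc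
  rw [fstIdx_ne_iff]
  intro l hl
  exact hc.1 l hl

lemma smul_mkTail (w : Word M) (a : Σ i, M i) (t : List (Σ i, M i))
    (h : w.toList = a :: t) : of a.2 • mkTail w a t h = w := by
  have h1 : a.2 ≠ 1 := w.ne_one a (h ▸ List.mem_cons_self)
  rw [← cons_eq_smul (h1 := mkTail_fstIdx w a t h) (h2 := h1)]
  apply Word.ext
  simp [cons, mkTail, h]

lemma smul_toList_merge {i : ι} (m m' : M i) (w : Word M) (t : List (Σ i, M i))
    (h : w.toList = ⟨i, m'⟩ :: t) (hmm : m * m' ≠ 1) :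
    (of m • w).toList = ⟨i, m * m'⟩ :: t := by
  conv_lhs => rw [← smul_mkTail w ⟨i, m'⟩ t h]
  rw [← mul_smul, ← MonoidHom.map_mul]
  rw [smul_toList_cons _ hmm _ (mkTail_fstIdx w ⟨i, m'⟩ t h)]
  rfl

lemma smul_toList_cancel {i : ι} (m m' : M i) (w : Word M) (t : List (Σ i, M i))
    (h : w.toList = ⟨i, m'⟩ :: t) (hmm : m * m' = 1) :
    (of m • w).toList = t := by
  conv_lhs => rw [← smul_mkTail w ⟨i, m'⟩ t h]
  rw [← mul_smul, ← MonoidHom.map_mul, hmm, MonoidHom.map_one, one_smul]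
  rfl

lemma word_prod_ne_one (w : Word M) (hw : w.toList ≠ []) : w.prod ≠ 1 := by
  intro hp
  have h2 : Word.prod w = Word.prod Word.empty := by rw [hp, prod_empty]
  have h3 : w = Word.empty := Word.equiv.symm.injective h2
  rw [h3] at hw
  exact hw rfl

end WordComp
end FPAux
namespace FPAux
section Setup

open Monoid.CoprodI Monoid.CoprodI.Word

universe u v

variable (G : Type u) (H : Type v) [Group G] [Group H]

/-- The two-element family `{G, H}` (lifted to a common universe). -/
abbrev Fam : Bool → Type (max u v) := fun b => cond b (ULift.{v} G) (ULift.{u} H)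

instance famGroup : ∀ b, Group (Fam G H b)
  | true => inferInstanceAs (Group (ULift G))
  | false => inferInstanceAs (Group (ULift H))

noncomputable instance famDec : ∀ b, DecidableEq (Fam G H b) := fun _ => Classical.decEq _

/-- The canonical map `G ∗ H →* CoprodI (Fam G H)`. -/
noncomputable def phi : Coprod G H →* Monoid.CoprodI (Fam G H) :=
  Coprod.lift
    ((of (M := Fam G H) (i := true)).comp (MulEquiv.ulift.symm : G ≃* ULift G).toMonoidHom)
    ((of (M := Fam G H) (i := false)).comp (MulEquiv.ulift.symm : H ≃* ULift H).toMonoidHom)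

/-- The inverse map. -/
noncomputable def psi : Monoid.CoprodI (Fam G H) →* Coprod G H :=
  Monoid.CoprodI.lift (fun b => Bool.rec
    ((Coprod.inr (M := G) (N := H)).comp (MulEquiv.ulift : ULift H ≃* H).toMonoidHom)
    ((Coprod.inl (M := G) (N := H)).comp (MulEquiv.ulift : ULift G ≃* G).toMonoidHom) b)

variable {G H}

/-- Wrapped inclusion of `G` into the family. -/
def upG (a : G) : Fam G H true := ULift.up a

/-- Wrapped inclusion of `H` into the family. -/
def upH (c : H) : Fam G H false := ULift.up c

@[simp] lemma upG_down (a : G) : (upG (H := H) a).down = a := rfl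

@[simp] lemma upH_down (c : H) : (upH (G := G) c).down = c := rfl

lemma phi_inl (a : G) : phi G H (Coprod.inl a) = of (M := Fam G H) (i := true) (upG a) := by
  rw [phi, Coprod.lift_apply_inl]; rfl

lemma phi_inr (b : H) : phi G H (Coprod.inr b) = of (M := Fam G H) (i := false) (upH b) := by
  rw [phi, Coprod.lift_apply_inr]; rfl

lemma psi_phi (x : Coprod G H) : psi G H (phi G H x) = x := by
  have : (psi G H).comp (phi G H) = MonoidHom.id _ := by
    apply Coprod.hom_ext <;> ext x
    · show psi G H (phi G H (Coprod.inl x)) = Coprod.inl x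
      rw [phi_inl, psi, Monoid.CoprodI.lift_of]
      rfl
    · show psi G H (phi G H (Coprod.inr x)) = Coprod.inr x
      rw [phi_inr, psi, Monoid.CoprodI.lift_of]
      rfl
  calc psi G H (phi G H x) = ((psi G H).comp (phi G H)) x := rfl
    _ = x := by rw [this]; rfl

lemma eq_one_of_phi (x : Coprod G H) (hx : phi G H x = 1) : x = 1 := by
  have := psi_phi (G := G) (H := H) x
  rw [hx, map_one] at this
  exact this.symm

end Setup
end FPAux
namespace FPAux
section Good

open Monoid.CoprodI Monoid.CoprodI.Word

universe u v

variable {G : Type u} {H : Type v} [Group G] [Group H]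

lemma fstIdx_eq_of_toList {w : Word (Fam G H)} {b : Bool} {m : Fam G H b}
    {t : List (Σ i, Fam G H i)} (hl : w.toList = ⟨b, m⟩ :: t) : w.fstIdx = some b := by
  simp [fstIdx, hl]

lemma fstIdx_eq_none_of_toList {w : Word (Fam G H)} (hl : w.toList = []) :
    w.fstIdx = none := by simp [fstIdx, hl]

/-- Every `H`-letter of `w` lies in the ball of radius `r`. -/
def Good (Y : Set H) (r : ℝ) (w : Word (Fam G H)) : Prop :=
  ∀ c : ULift.{u} H, (⟨false, c⟩ : Σ b, Fam G H b) ∈ w.toList → c.down ∈ wordBall Y r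

lemma good_mono {Y : Set H} {r r' : ℝ} (hr : r ≤ r') {w : Word (Fam G H)}
    (hw : Good Y r w) : Good Y r' w := fun c hc => wb_mono hr (hw c hc)

lemma good_empty (Y : Set H) (r : ℝ) : Good Y r (Word.empty (M := Fam G H)) := by
  intro c hc
  simp [Word.empty] at hc

lemma fdown_mul (c c' : Fam G H false) : (c * c').down = c.down * c'.down := rfl

lemma f_one_down : (1 : Fam G H false).down = 1 := rfl

lemma f_eq_one_iff {c : Fam G H false} : c = 1 ↔ c.down = 1 := by
  constructor
  · intro hc; rw [hc]; rfl
  · intro hc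
    cases c
    cases hc
    rfl

lemma good_step_true {Y : Set H} {r : ℝ} (a : Fam G H true) {w : Word (Fam G H)}
    (hw : Good Y r w) : Good Y r (of a • w) := by
  by_cases ha : a = 1
  · rw [ha, map_one, one_smul]; exact hw
  rcases hl : w.toList with _ | ⟨⟨b, m'⟩, t⟩
  · intro c hc
    rw [smul_toList_cons a ha w (by rw [fstIdx_eq_none_of_toList hl]; simp), hl] at hc
    simp at hc
  cases b
  · intro c hc
    rw [smul_toList_cons a ha w (by rw [fstIdx_eq_of_toList hl]; simp)] at hc
    rcases List.mem_cons.1 hc with heq | hc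
    · simp at heq
    · exact hw c hc
  · by_cases haa : a * m' = 1
    · intro c hc
      rw [smul_toList_cancel a m' w t hl haa] at hc
      exact hw c (hl ▸ List.mem_cons_of_mem _ hc)
    · intro c hc
      rw [smul_toList_merge a m' w t hl haa] at hc
      rcases List.mem_cons.1 hc with heq | hc
      · simp at heq
      · exact hw c (hl ▸ List.mem_cons_of_mem _ hc)

lemma good_step_false {Y : Set H} {r : ℝ} (hr : 0 ≤ r) (y : Fam G H false)
    (hy : y.down ∈ Y ∨ y.down⁻¹ ∈ Y) {w : Word (Fam G H)}
    (hw : Good Y r w) : Good Y (r + 1) (of y • w) := by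
  by_cases hy1 : y = 1
  · rw [hy1, map_one, one_smul]
    exact good_mono (by linarith) hw
  rcases hl : w.toList with _ | ⟨⟨b, m'⟩, t⟩
  · intro c hc
    rw [smul_toList_cons y hy1 w (by rw [fstIdx_eq_none_of_toList hl]; simp), hl] at hc
    simp only [List.mem_singleton] at hc
    obtain ⟨_, hc2⟩ := Sigma.mk.inj_iff.1 hc
    rw [eq_of_heq hc2]
    exact wb_single hy (by linarith)
  cases b
  · -- head is an H-letter : merge or cancel
    by_cases hyy : y * m' = 1
    · intro c hc
      rw [smul_toList_cancel y m' w t hl hyy] at hc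
      exact wb_mono (by linarith) (hw c (hl ▸ List.mem_cons_of_mem _ hc))
    · intro c hc
      rw [smul_toList_merge y m' w t hl hyy] at hc
      rcases List.mem_cons.1 hc with heq | hc
      · obtain ⟨_, hc2⟩ := Sigma.mk.inj_iff.1 heq
        rw [eq_of_heq hc2, fdown_mul]
        exact wb_cons hy (hw m' (hl ▸ List.mem_cons_self))
      · exact wb_mono (by linarith) (hw c (hl ▸ List.mem_cons_of_mem _ hc))
  · intro c hc
    rw [smul_toList_cons y hy1 w (by rw [fstIdx_eq_of_toList hl]; simp)] at hc
    rcases List.mem_cons.1 hc with heq | hc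
    · obtain ⟨_, hc2⟩ := Sigma.mk.inj_iff.1 heq
      rw [eq_of_heq hc2]
      exact wb_single hy (by linarith)
    · exact wb_mono (by linarith) (hw c hc)

lemma letter_cases {X : Set G} {Y : Set H} {x : Coprod G H}
    (hx : x ∈ ((⇑(Coprod.inl : G →* Coprod G H)) '' X ∪ (⇑(Coprod.inr : H →* Coprod G H)) '' Y)
      ∨ x⁻¹ ∈ ((⇑(Coprod.inl : G →* Coprod G H)) '' X ∪
          (⇑(Coprod.inr : H →* Coprod G H)) '' Y)) :
    (∃ a : G, x = Coprod.inl a) ∨ ∃ y : H, (y ∈ Y ∨ y⁻¹ ∈ Y) ∧ x = Coprod.inr y := by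
  rcases hx with (⟨a, _, rfl⟩ | ⟨y, hy, rfl⟩) | (⟨a, _, ha⟩ | ⟨y, hy, hyx⟩)
  · exact Or.inl ⟨a, rfl⟩
  · exact Or.inr ⟨y, Or.inl hy, rfl⟩
  · refine Or.inl ⟨a⁻¹, ?_⟩
    rw [← inv_inv x, ← ha]
    exact (map_inv _ _).symm
  · refine Or.inr ⟨y⁻¹, Or.inr (by simpa using hy), ?_⟩
    rw [← inv_inv x, ← hyx]
    exact (map_inv _ _).symm

lemma processGood {X : Set G} {Y : Set H} (l : List (Coprod G H))
    (hl : ∀ x ∈ l,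
      x ∈ ((⇑(Coprod.inl : G →* Coprod G H)) '' X ∪ (⇑(Coprod.inr : H →* Coprod G H)) '' Y)
      ∨ x⁻¹ ∈ ((⇑(Coprod.inl : G →* Coprod G H)) '' X ∪
          (⇑(Coprod.inr : H →* Coprod G H)) '' Y)) :
    ∀ (r : ℝ) (w : Word (Fam G H)), 0 ≤ r → Good Y r w →
      Good Y (r + l.length) (phi G H l.prod • w) := by
  induction l with
  | nil => intro r w _ hw; simpa using hw
  | cons x l ih =>
    intro r w hr hw
    have hx := letter_cases (X := X) (Y := Y) (hl x (List.mem_cons_self))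
    have hstep : Good Y (r + l.length) (phi G H l.prod • w) :=
      ih (fun z hz => hl z (List.mem_cons_of_mem _ hz)) r w hr hw
    have hmul : phi G H (x :: l).prod • w = phi G H x • (phi G H l.prod • w) := by
      rw [List.prod_cons, map_mul, mul_smul]
    rw [hmul]
    have hlen : (r + (x :: l).length : ℝ) = (r + l.length) + 1 := by
      push_cast [List.length_cons]
      ring
    rw [hlen]
    rcases hx with ⟨a, rfl⟩ | ⟨y, hy, rfl⟩
    · rw [phi_inl]
      exact good_mono (by linarith) (good_step_true (upG a) hstep)
    · rw [phi_inr]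
      exact good_step_false (by positivity) (upH y) (by simpa [upH] using hy) hstep

lemma good_of_ball {X : Set G} {Y : Set H} {s : Coprod G H} {R : ℝ}
    (hs : s ∈ wordBall ((⇑(Coprod.inl : G →* Coprod G H)) '' X ∪
      (⇑(Coprod.inr : H →* Coprod G H)) '' Y) R) (hR : 0 ≤ R) :
    Good Y R (phi G H s • Word.empty (M := Fam G H)) := by
  obtain ⟨l, hlen, hmem, rfl⟩ := hs
  have := processGood (X := X) (Y := Y) l hmem 0 (Word.empty (M := Fam G H)) le_rfl (good_empty Y 0)
  rw [zero_add] at this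
  exact good_mono hlen this

end Good
end FPAux
namespace FPAux
section Inv

open Monoid.CoprodI Monoid.CoprodI.Word

universe u v

variable {G : Type u} {H : Type v} [Group G] [Group H]

lemma upH_eq_one_iff {c : H} : upH (G := G) c = 1 ↔ c = 1 := by
  constructor
  · intro hc
    exact congrArg ULift.down hc
  · intro hc; rw [hc]; rfl

/-- Invariant while processing a ball element on top of a word protected by the letter `h`. -/
def InvB (Y : Set H) (h : H) (x : Fam G H true) (rest : List (Σ b, Fam G H b))
    (j : ℝ) (w : Word (Fam G H)) : Prop :=
  ∃ (d : List (Σ b, Fam G H b)) (b : H), b ∈ wordBall Y j ∧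
    (∀ c : ULift.{u} H, (⟨false, c⟩ : Σ b, Fam G H b) ∈ d → c.down ∈ wordBall Y j) ∧
    w.toList = d ++ ⟨false, upH (b * h)⟩ :: ⟨true, x⟩ :: rest

variable {Y : Set H} {h : H} {x : Fam G H true} {rest : List (Σ b, Fam G H b)}
  {j j' N : ℝ} {w : Word (Fam G H)}

lemma invB_mono (hj : j ≤ j') (hw : InvB Y h x rest j w) : InvB Y h x rest j' w := by
  obtain ⟨d, b, hb, hd, hlist⟩ := hw
  exact ⟨d, b, wb_mono hj hb, fun c hc => wb_mono hj (hd c hc), hlist⟩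

lemma upH_mul (a b : H) : upH (G := G) a * upH b = upH (a * b) := rfl

lemma invB_step_true (hj : 0 ≤ j) (a : Fam G H true) (hw : InvB Y h x rest j w) :
    InvB Y h x rest (j + 1) (of a • w) := by
  obtain ⟨d, b, hb, hd, hlist⟩ := hw
  by_cases ha : a = 1
  · rw [ha, map_one, one_smul]
    exact invB_mono (by linarith) ⟨d, b, hb, hd, hlist⟩
  rcases d with _ | ⟨⟨i, m'⟩, d'⟩
  · rw [List.nil_append] at hlist
    refine ⟨[⟨true, a⟩], b, wb_mono (by linarith) hb, by simp, ?_⟩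
    rw [smul_toList_cons a ha w (by rw [fstIdx_eq_of_toList hlist]; simp), hlist]
    simp
  cases i
  · -- head of d is an H-letter, different index: cons
    refine ⟨⟨true, a⟩ :: ⟨false, m'⟩ :: d', b, wb_mono (by linarith) hb, ?_, ?_⟩
    · intro c hc
      rcases List.mem_cons.1 hc with heq | hc
      · simp at heq
      · exact wb_mono (by linarith) (hd c hc)
    · rw [smul_toList_cons a ha w (by rw [fstIdx_eq_of_toList hlist]; simp), hlist]
      simp
  · -- head of d is a G-letter: merge or cancel
    rw [List.cons_append] at hlist
    by_cases haa : a * m' = 1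
    · refine ⟨d', b, wb_mono (by linarith) hb, ?_, ?_⟩
      · intro c hc
        exact wb_mono (by linarith) (hd c (List.mem_cons_of_mem _ hc))
      · rw [smul_toList_cancel a m' w _ hlist haa]
    · refine ⟨⟨true, a * m'⟩ :: d', b, wb_mono (by linarith) hb, ?_, ?_⟩
      · intro c hc
        rcases List.mem_cons.1 hc with heq | hc
        · simp at heq
        · exact wb_mono (by linarith) (hd c (List.mem_cons_of_mem _ hc))
      · rw [smul_toList_merge a m' w _ hlist haa]
        simp

lemma invB_step_false (hj : 0 ≤ j) (hjN : j + 1 ≤ N) (hh : h ∉ wordBall Y N)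
    (y : Fam G H false) (hy : y.down ∈ Y ∨ y.down⁻¹ ∈ Y)
    (hw : InvB Y h x rest j w) :
    InvB Y h x rest (j + 1) (of y • w) := by
  obtain ⟨d, b, hb, hd, hlist⟩ := hw
  by_cases hy1 : y = 1
  · rw [hy1, map_one, one_smul]
    exact invB_mono (by linarith) ⟨d, b, hb, hd, hlist⟩
  rcases d with _ | ⟨⟨i, m'⟩, d'⟩
  · -- merge with the protected letter
    rw [List.nil_append] at hlist
    have hmm : y * upH (b * h) ≠ 1 := by
      intro hcon
      apply hh
      have h1 : y.down * (b * h) = 1 := congrArg ULift.down hcon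
      have h2 : (y.down * b) * h = 1 := by rw [mul_assoc]; exact h1
      have h3 : h = (y.down * b)⁻¹ := eq_inv_of_mul_eq_one_right h2
      rw [h3]
      exact wb_inv (wb_mono hjN (wb_cons hy hb))
    refine ⟨[], y.down * b, wb_cons hy hb, by simp, ?_⟩
    rw [smul_toList_merge y (upH (b * h)) w _ hlist hmm, List.nil_append]
    have hrw : y * upH (b * h) = upH (y.down * b * h) := by
      have h0 : y * upH (b * h) = upH (y.down * (b * h)) := rfl
      rw [h0, mul_assoc]
    rw [hrw]
  cases i
  · -- head of d is an H-letter: merge or cancel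
    rw [List.cons_append] at hlist
    by_cases hyy : y * m' = 1
    · refine ⟨d', b, wb_mono (by linarith) hb, ?_, ?_⟩
      · intro c hc
        exact wb_mono (by linarith) (hd c (List.mem_cons_of_mem _ hc))
      · rw [smul_toList_cancel y m' w _ hlist hyy]
    · refine ⟨⟨false, y * m'⟩ :: d', b, wb_mono (by linarith) hb, ?_, ?_⟩
      · intro c hc
        rcases List.mem_cons.1 hc with heq | hc
        · obtain ⟨_, hc2⟩ := Sigma.mk.inj_iff.1 heq
          rw [eq_of_heq hc2, fdown_mul]
          exact wb_cons hy (hd m' (List.mem_cons_self))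
        · exact wb_mono (by linarith) (hd c (List.mem_cons_of_mem _ hc))
      · rw [smul_toList_merge y m' w _ hlist hyy]
        simp
  · -- head of d is a G-letter : cons
    refine ⟨⟨false, y⟩ :: ⟨true, m'⟩ :: d', b, wb_mono (by linarith) hb, ?_, ?_⟩
    · intro c hc
      rcases List.mem_cons.1 hc with heq | hc
      · obtain ⟨_, hc2⟩ := Sigma.mk.inj_iff.1 heq
        rw [eq_of_heq hc2]
        exact wb_single hy (by linarith)
      · exact wb_mono (by linarith) (hd c hc)
    · rw [smul_toList_cons y hy1 w (by rw [fstIdx_eq_of_toList hlist]; simp), hlist]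
      simp

lemma h_ne_one (hN0 : 0 ≤ N) (hh : h ∉ wordBall Y N) : h ≠ 1 := by
  intro hcon
  exact hh (hcon ▸ wb_one hN0)

lemma invB_hstep (hjN : j ≤ N) (hN0 : 0 ≤ N) (hh : h ∉ wordBall Y N)
    (hw : InvB Y h x rest j w) :
    (of (M := Fam G H) (i := false) (upH h⁻¹) • w).fstIdx = some false ∨
      w.toList = ⟨false, upH h⟩ :: ⟨true, x⟩ :: rest := by
  have hne1 : h ≠ 1 := h_ne_one hN0 hh
  have hup : upH (G := G) h⁻¹ ≠ 1 := by
    rw [Ne, upH_eq_one_iff]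
    simpa using hne1
  obtain ⟨d, b, hb, hd, hlist⟩ := hw
  rcases d with _ | ⟨⟨i, m'⟩, d'⟩
  · rw [List.nil_append] at hlist
    by_cases hb1 : b = 1
    · right
      rw [hlist, hb1, one_mul]
    · left
      have hmm : upH (G := G) h⁻¹ * upH (b * h) ≠ 1 := by
        rw [upH_mul, Ne, upH_eq_one_iff]
        intro hcon
        apply hb1
        have h2 : b * h = h := by
          have := inv_mul_eq_one.1 hcon
          exact this.symm
        exact mul_eq_right.1 h2
      exact fstIdx_eq_of_toList (smul_toList_merge _ _ w _ hlist hmm)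
  cases i
  · rw [List.cons_append] at hlist
    have hmm : upH (G := G) h⁻¹ * m' ≠ 1 := by
      intro hcon
      apply hh
      have h1 : h⁻¹ * m'.down = 1 := congrArg ULift.down hcon
      have h2 : h = m'.down := inv_mul_eq_one.1 h1
      rw [h2]
      exact wb_mono hjN (hd m' (List.mem_cons_self))
    exact Or.inl (fstIdx_eq_of_toList (smul_toList_merge _ _ w _ hlist hmm))
  · rw [List.cons_append] at hlist
    exact Or.inl (fstIdx_eq_of_toList
      (smul_toList_cons _ hup w (by rw [fstIdx_eq_of_toList hlist]; simp)))

lemma ghstep (w₁ : Word (Fam G H)) (hw₁ : w₁.fstIdx = some false)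
    (a : Fam G H true) (ha : a ≠ 1) (hh1 : h ≠ 1) :
    (of (M := Fam G H) (i := false) (upH h) • (of a • w₁)).toList =
      ⟨false, upH h⟩ :: ⟨true, a⟩ :: w₁.toList := by
  have h1 : (of a • w₁).toList = ⟨true, a⟩ :: w₁.toList :=
    smul_toList_cons a ha w₁ (by rw [hw₁]; simp)
  have hup : upH (G := G) h ≠ 1 := by
    rw [Ne, upH_eq_one_iff]; exact hh1
  rw [smul_toList_cons _ hup _ (by rw [fstIdx_eq_of_toList h1]; simp), h1]

end Inv
end FPAux
namespace FPAux
section Main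

open Monoid.CoprodI Monoid.CoprodI.Word

universe u v

variable {G : Type u} {H : Type v} [Group G] [Group H]

/-- `upG` as a monoid hom. -/
def upGHom : G →* Fam G H true := MonoidHom.mk' upG (fun _ _ => rfl)

lemma upG_zpow (g : G) (k : ℤ) : (upG (H := H) g) ^ k = upG (g ^ k) :=
  (map_zpow (upGHom (H := H)) g k).symm

lemma upG_eq_one_iff {a : G} : upG (H := H) a = 1 ↔ a = 1 := by
  constructor
  · intro hc
    exact congrArg ULift.down hc
  · intro hc; rw [hc]; rfl

lemma upH_inv (c : H) : (upH (G := G) c)⁻¹ = upH c⁻¹ := rfl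

lemma upG_pow_ne_one {g : G} (hg : ¬ IsOfFinOrder g) {k : ℤ} (hk : k ≠ 0) :
    (upG (H := H) g) ^ k ≠ 1 := by
  rw [upG_zpow, Ne, upG_eq_one_iff]
  intro hcon
  apply hk
  have hinj := injective_zpow_iff_not_isOfFinOrder.2 hg
  exact hinj (by simpa using hcon)

lemma processB {X : Set G} {Y : Set H} {h : H} {x : Fam G H true}
    {rest : List (Σ b, Fam G H b)} {N : ℝ} (hh : h ∉ wordBall Y N)
    (l : List (Coprod G H))
    (hl : ∀ z ∈ l,
      z ∈ ((⇑(Coprod.inl : G →* Coprod G H)) '' X ∪ (⇑(Coprod.inr : H →* Coprod G H)) '' Y)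
      ∨ z⁻¹ ∈ ((⇑(Coprod.inl : G →* Coprod G H)) '' X ∪
          (⇑(Coprod.inr : H →* Coprod G H)) '' Y)) :
    ∀ (j : ℝ) (w : Word (Fam G H)), 0 ≤ j → j + l.length ≤ N →
      InvB Y h x rest j w → InvB Y h x rest (j + l.length) (phi G H l.prod • w) := by
  induction l with
  | nil => intro j w hj _ hw; simpa using hw
  | cons z l ih =>
    intro j w hj hjN hw
    have hz := letter_cases (X := X) (Y := Y) (hl z (List.mem_cons_self))
    have hlc : (((z :: l).length : ℕ) : ℝ) = (l.length : ℝ) + 1 := by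
      push_cast [List.length_cons]; ring
    rw [hlc] at hjN ⊢
    have hstep := ih (fun t ht => hl t (List.mem_cons_of_mem _ ht)) j w hj
      (by linarith) hw
    have hmul : phi G H (z :: l).prod • w = phi G H z • (phi G H l.prod • w) := by
      rw [List.prod_cons, map_mul, mul_smul]
    rw [hmul, ← add_assoc]
    rcases hz with ⟨a, rfl⟩ | ⟨y, hy, rfl⟩
    · rw [phi_inl]
      exact invB_step_true (by positivity) (upG a) hstep
    · rw [phi_inr]
      exact invB_step_false (by positivity) (by linarith) hh (upH y)
        (by simpa using hy) hstep

lemma good_hstep {Y : Set H} {h : H} {N : ℝ} (hN0 : 0 ≤ N) (hh : h ∉ wordBall Y N)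
    {w : Word (Fam G H)} (hw : Good Y N w) :
    (of (M := Fam G H) (i := false) (upH h⁻¹) • w).fstIdx = some false := by
  have hne1 : h ≠ 1 := h_ne_one hN0 hh
  have hup : upH (G := G) h⁻¹ ≠ 1 := by
    rw [Ne, upH_eq_one_iff]
    simpa using hne1
  rcases hl : w.toList with _ | ⟨⟨b, m'⟩, t⟩
  · exact fstIdx_eq_of_toList
      (by rw [smul_toList_cons _ hup w (by rw [fstIdx_eq_none_of_toList hl]; simp), hl])
  cases b
  · have hmm : upH (G := G) h⁻¹ * m' ≠ 1 := by
      intro hcon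
      apply hh
      have h1 : h⁻¹ * m'.down = 1 := congrArg ULift.down hcon
      have h2 : h = m'.down := inv_mul_eq_one.1 h1
      rw [h2]
      exact hw m' (hl ▸ List.mem_cons_self)
    exact fstIdx_eq_of_toList (smul_toList_merge _ _ w _ hl hmm)
  · exact fstIdx_eq_of_toList
      (smul_toList_cons _ hup w (by rw [fstIdx_eq_of_toList hl]; simp))

/-- The suffix product `∏ (h g^{pᵢ} h⁻¹) sᵢ`. -/
def VL (g : G) (h : H) (L : List (ℤ × Coprod G H)) : Coprod G H :=
  (L.map (fun q => Coprod.inr h * (Coprod.inl g : Coprod G H) ^ q.1 *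
    (Coprod.inr (M := G) h)⁻¹ * q.2)).prod

lemma phi_block (g : G) (h : H) (k : ℤ) (t : Coprod G H) :
    phi G H (Coprod.inr h * (Coprod.inl g : Coprod G H) ^ k * (Coprod.inr (M := G) h)⁻¹ * t) =
      of (M := Fam G H) (i := false) (upH h) *
        (of (M := Fam G H) (i := true) ((upG g) ^ k) *
          (of (M := Fam G H) (i := false) (upH h⁻¹) * phi G H t)) := by
  rw [map_mul, map_mul, map_mul, map_zpow, map_inv, phi_inl, phi_inr, map_zpow, ← map_inv,
    upH_inv, mul_assoc, mul_assoc]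

lemma mainClaim {X : Set G} {Y : Set H} (g : G) (hg : ¬ IsOfFinOrder g) {N : ℝ}
    (hN0 : 0 ≤ N) {h : H} (hh : h ∉ wordBall Y N)
    (L : List (ℤ × Coprod G H)) (hL : L ≠ [])
    (hmem : ∀ q ∈ L, q.1 ≠ 0 ∧
      q.2 ∈ wordBall ((⇑(Coprod.inl : G →* Coprod G H)) '' X ∪
        (⇑(Coprod.inr : H →* Coprod G H)) '' Y) N)
    (hdl : ∀ q ∈ L.dropLast, q.2 ≠ 1) :
    ∃ (x : Fam G H true) (rest : List (Σ b, Fam G H b)),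
      (phi G H (VL g h L) • (Word.empty (M := Fam G H))).toList =
        ⟨false, upH h⟩ :: ⟨true, x⟩ :: rest := by
  induction L with
  | nil => exact absurd rfl hL
  | cons q L ih =>
    have hq := hmem q (List.mem_cons_self)
    have hVL : phi G H (VL g h (q :: L)) • (Word.empty (M := Fam G H)) =
        of (M := Fam G H) (i := false) (upH h) •
          (of (M := Fam G H) (i := true) ((upG g) ^ q.1) •
            (of (M := Fam G H) (i := false) (upH h⁻¹) •
              (phi G H q.2 • (phi G H (VL g h L) • (Word.empty (M := Fam G H)))))) := by
      rw [VL, List.map_cons, List.prod_cons, map_mul, phi_block, mul_assoc, mul_smul, mul_smul,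
        mul_smul, mul_smul]
      rfl
    have hgp : (upG (H := H) g) ^ q.1 ≠ 1 := upG_pow_ne_one hg hq.1
    have hne1 : h ≠ 1 := h_ne_one hN0 hh
    rcases eq_or_ne L [] with rfl | hL'
    · -- base case
      have hVL0 : VL g h ([] : List (ℤ × Coprod G H)) = 1 := rfl
      rw [hVL, hVL0, map_one, one_smul]
      have hgood : Good Y N (phi G H q.2 • (Word.empty (M := Fam G H))) :=
        good_of_ball hq.2 hN0
      have hfst := good_hstep hN0 hh hgood
      exact ⟨(upG g) ^ q.1, _, ghstep _ hfst _ hgp hne1⟩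
    · -- inductive step
      obtain ⟨x, rest, hu⟩ := ih hL' (fun t ht => hmem t (List.mem_cons_of_mem _ ht))
        (fun t ht => hdl t (by
          rw [List.dropLast_cons_of_ne_nil hL']
          exact List.mem_cons_of_mem _ ht))
      set u := phi G H (VL g h L) • (Word.empty (M := Fam G H)) with hu_def
      have hInv0 : InvB Y h x rest 0 u := by
        refine ⟨[], 1, wb_one le_rfl, by simp, ?_⟩
        rw [hu, one_mul]
        simp
      obtain ⟨l, hlen, hmeml, hprod⟩ := hq.2
      have hInv : InvB Y h x rest (0 + l.length) (phi G H q.2 • u) := by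
        rw [← hprod]
        exact processB hh l hmeml 0 u le_rfl (by rw [zero_add]; exact hlen) hInv0
      rcases invB_hstep (by rw [zero_add] at hInv ⊢; exact hlen) hN0 hh hInv with hfst | heq
      · rw [hVL]
        exact ⟨(upG g) ^ q.1, _, ghstep _ hfst _ hgp hne1⟩
      · -- cancellation: q.2 must be 1, contradiction
        exfalso
        have hweq : phi G H q.2 • u = u := by
          apply Word.ext
          rw [heq, hu]
        have hprod_eq : phi G H q.2 * Word.prod u = Word.prod u := by
          rw [← Word.prod_smul, hweq]
        have hone : phi G H q.2 = 1 := by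
          have := mul_right_cancel (b := Word.prod u) (a := phi G H q.2) (c := 1)
            (by rw [hprod_eq, one_mul])
          exact this
        have : q.2 = 1 := eq_one_of_phi _ hone
        apply hdl q (by
          rw [List.dropLast_cons_of_ne_nil hL']
          exact List.mem_cons_self) this

end Main
end FPAux

namespace FPAux

lemma shift {M₀ : Type*} [Monoid M₀] (a b : ℕ → M₀) :
    ∀ k : ℕ, ((List.range k).map (fun i => a i * b i)).prod * a k =
      a 0 * ((List.range k).map (fun i => b i * a (i + 1))).prod
  | 0 => by simp
  | (k + 1) => by
    rw [List.range_succ, List.map_append, List.map_append, List.prod_append, List.prod_append]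
    simp only [List.map_cons, List.map_nil, List.prod_cons, List.prod_nil, mul_one]
    have ih := shift a b k
    rw [show ((List.range k).map fun i => a i * b i).prod * (a k * b k) * a (k + 1) =
        (((List.range k).map fun i => a i * b i).prod * a k) * (b k * a (k + 1)) by
          simp only [mul_assoc], ih, mul_assoc]

end FPAux


open FPAux

/-- Key freeness lemma in a free product `G ∗ H`: if `g ∈ G` has infinite order,
`h ∈ H` lies outside the ball `B_Y(2n)`, the `sᵢ ∈ G ∗ H` lie in the ball
`B_{X∪Y}(2n)` (images of `X ⊆ G` and `Y ⊆ H`) with `sᵢ ≠ 1` for `1 < i < m`, and the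
`pᵢ` are nonzero integers, then
`s₁·(h g^{p₁} h⁻¹)·s₂·(h g^{p₂} h⁻¹) ⋯ s_{m-1}·(h g^{p_{m-1}} h⁻¹)·s_m ≠ 1`. -/
theorem freeProduct_word_nontrivial {G H : Type*} [Group G] [Group H]
    (X : Set G) (Y : Set H) (g : G) (hg : ¬ IsOfFinOrder g)
    (n : ℕ) (hn : 1 ≤ n) (h : H) (hh : h ∉ wordBall Y (2 * n))
    (m : ℕ) (hm : 2 ≤ m)
    (s : ℕ → Coprod G H)
    (hs : ∀ i, 1 ≤ i → i ≤ m →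
      s i ∈ wordBall ((⇑(Coprod.inl : G →* Coprod G H)) '' X ∪
        (⇑(Coprod.inr : H →* Coprod G H)) '' Y) (2 * n))
    (hs' : ∀ i, 1 < i → i < m → s i ≠ 1)
    (p : ℕ → ℤ) (hp : ∀ i, 1 ≤ i → i ≤ m - 1 → p i ≠ 0) :
    ((List.range (m - 1)).map (fun i =>
        s (i + 1) * (Coprod.inr h * (Coprod.inl g : Coprod G H) ^ (p (i + 1)) *
          (Coprod.inr h : Coprod G H)⁻¹))).prod * s m ≠ 1 := by
  intro hcon
  have h2n0 : (0 : ℝ) ≤ 2 * n := by positivity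
  set L₀ : List (ℤ × Coprod G H) := (List.range (m - 1)).map (fun i => (p (i + 1), s (i + 2)))
    with hL₀
  have hm1 : m - 1 + 1 = m := Nat.sub_add_cancel (by omega)
  have hVL : VL g h L₀ = ((List.range (m - 1)).map (fun i =>
      (Coprod.inr h * (Coprod.inl g : Coprod G H) ^ (p (i + 1)) *
        (Coprod.inr (M := G) h)⁻¹) * s (i + 2))).prod := by
    rw [VL, hL₀, List.map_map]
    rfl
  have hkey : s 1 * ((List.range (m - 1)).map (fun i =>
        (Coprod.inr h * (Coprod.inl g : Coprod G H) ^ (p (i + 1)) *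
          (Coprod.inr (M := G) h)⁻¹) * s (i + 2))).prod
      = ((List.range (m - 1)).map (fun i =>
          s (i + 1) * (Coprod.inr h * (Coprod.inl g : Coprod G H) ^ (p (i + 1)) *
            (Coprod.inr h : Coprod G H)⁻¹))).prod * s m := by
    have hshift := FPAux.shift (fun i => s (i + 1))
      (fun i => (Coprod.inr h * (Coprod.inl g : Coprod G H) ^ (p (i + 1)) *
        (Coprod.inr (M := G) h)⁻¹)) (m - 1)
    rw [hm1] at hshift
    exact hshift.symm
  rw [← hkey] at hcon
  have hQ : VL g h L₀ = (s 1)⁻¹ := by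
    rw [hVL]
    exact eq_inv_of_mul_eq_one_right hcon
  obtain ⟨x, rest, hlist⟩ := mainClaim (X := X) (Y := Y) g hg h2n0 hh L₀
    (by
      simp only [hL₀, ne_eq, List.map_eq_nil_iff, List.range_eq_nil]
      omega)
    (by
      intro q hq
      simp only [hL₀, List.mem_map, List.mem_range] at hq
      obtain ⟨i, hi, rfl⟩ := hq
      exact ⟨hp (i + 1) (by omega) (by omega), hs (i + 2) (by omega) (by omega)⟩)
    (by
      intro q hq
      rw [hL₀, ← List.map_dropLast] at hq
      have hdrop : (List.range (m - 1)).dropLast = List.range (m - 2) := by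
        rw [show m - 1 = (m - 2) + 1 by omega, List.range_succ, List.dropLast_concat]
      rw [hdrop] at hq
      simp only [List.mem_map, List.mem_range] at hq
      obtain ⟨i, hi, rfl⟩ := hq
      exact hs' (i + 2) (by omega) (by omega))
  have hgood : Good Y (2 * n) (phi G H (VL g h L₀) •
      (Monoid.CoprodI.Word.empty (M := Fam G H))) := by
    rw [hQ]
    exact good_of_ball (wb_inv (hs 1 le_rfl (by omega))) h2n0
  have hmem' : (⟨false, upH h⟩ : Σ b, Fam G H b) ∈
      (phi G H (VL g h L₀) • (Monoid.CoprodI.Word.empty (M := Fam G H))).toList := by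
    rw [hlist]
    exact List.mem_cons_self
  have := hgood (upH h) hmem'
  rw [upH_down] at this
  exact hh this
end

section
/- Let Γ be a countable group with finite generating set Y and let G be a countable group with finite generating set X having the rapid decay property with polynomial P. Let R ≥ 1, m ≥ 1 be integers, let r' ∈ ℕ, and let φ : Γ → G be a group homomorphism that is injective on B_Y(2mR) and satisfies φ(B_Y(2mR)) ⊆ B_X(r'). Then for every x ∈ ℂΓ supported on B_Y(R), ‖φ(x)‖^{2m} ≤ P(r')·‖x‖^{2m}, where the norms are the reduced operator norms on ℂG and ℂΓ respectively and φ also denotes the induced linear map ℂΓ → ℂG. -/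
open Filter Monoid

/-- The ℓ¹-norm on the complex group algebra. -/
noncomputable def groupAlgNorm1 {Γ : Type*} [Group Γ] (x : MonoidAlgebra ℂ Γ) : ℝ :=
  ∑ g ∈ x.coeff.support, ‖x.coeff g‖

/-- The ℓ²-norm on the complex group algebra. -/
noncomputable def groupAlgNorm2 {Γ : Type*} [Group Γ] (x : MonoidAlgebra ℂ Γ) : ℝ :=
  Real.sqrt (∑ g ∈ x.coeff.support, (‖x.coeff g‖) ^ 2)

/-- The reduced operator norm on the complex group algebra:
`‖x‖ = sup {‖x·y‖₂ : y ∈ ℂΓ, ‖y‖₂ ≤ 1}`. -/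
noncomputable def groupAlgOpNorm {Γ : Type*} [Group Γ] (x : MonoidAlgebra ℂ Γ) : ℝ :=
  sSup {r : ℝ | ∃ y : MonoidAlgebra ℂ Γ, groupAlgNorm2 y ≤ 1 ∧ r = groupAlgNorm2 (x * y)}

/-- The linear extension of a group homomorphism `φ : Γ → G` to `ℂΓ → ℂG`. -/
noncomputable def groupAlgMap {Γ G : Type*} [Group Γ] [Group G] (φ : Γ →* G)
    (x : MonoidAlgebra ℂ Γ) : MonoidAlgebra ℂ G :=
  MonoidAlgebra.ofCoeff (Finsupp.mapDomain φ x.coeff)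

/-- `(G, X)` has the rapid decay property with polynomial `P` if `‖b‖ ≤ P(r)·‖b‖₂`
for every `r ∈ ℕ` and every `b ∈ ℂG` supported on `B_X(r)`. -/
def RapidDecayWith {G : Type*} [Group G] (X : Set G) (P : Polynomial ℝ) : Prop :=
  ∀ r : ℕ, ∀ b : MonoidAlgebra ℂ G, (↑b.coeff.support : Set G) ⊆ wordBall X r →
    groupAlgOpNorm b ≤ P.eval (r : ℝ) * groupAlgNorm2 b

/-- `(G, X)` has the rapid decay property. -/
def RapidDecay {G : Type*} [Group G] (X : Set G) : Prop :=
  ∃ P : Polynomial ℝ, RapidDecayWith X P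

/-- Given `ι : G → Γ`, the group `Γ` is *existentially C*-residually-`G`* if for every
finite `S ⊆ Γ` and `ε > 0` there is a homomorphism `φ : Γ → G` with `φ ∘ ι = id_G` and
`‖φ(z)‖ ≤ ‖z‖ + ε` for every `z ∈ ℂΓ` supported on `S` with `‖z‖₁ = 1`. -/
def ExistentiallyCstarResidually {G Γ : Type*} [Group G] [Group Γ] (ι : G →* Γ) : Prop :=
  ∀ S : Finset Γ, ∀ ε : ℝ, 0 < ε →
    ∃ φ : Γ →* G, (∀ g : G, φ (ι g) = g) ∧
      ∀ z : MonoidAlgebra ℂ Γ, (↑z.coeff.support : Set Γ) ⊆ (↑S : Set Γ) →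
        groupAlgNorm1 z = 1 →
        groupAlgOpNorm (groupAlgMap φ z) ≤ groupAlgOpNorm z + ε

set_option maxHeartbeats 1000000
set_option linter.unusedSectionVars false

namespace RDAux

open Finsupp MonoidAlgebra
open scoped Pointwise

section WordBall

variable {K : Type*} [Group K]

theorem one_mem_wordBall {T : Set K} {r : ℝ} (hr : 0 ≤ r) : (1 : K) ∈ wordBall T r :=
  ⟨[], by simpa using hr, by simp, rfl⟩

theorem mul_mem_wordBall {T : Set K} {r s : ℝ} {g h : K}
    (hg : g ∈ wordBall T r) (hh : h ∈ wordBall T s) : g * h ∈ wordBall T (r + s) := by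
  obtain ⟨l, hl, hlT, rfl⟩ := hg
  obtain ⟨l', hl', hlT', rfl⟩ := hh
  refine ⟨l ++ l', by push_cast [List.length_append]; linarith, fun x hx => ?_, List.prod_append⟩
  rcases List.mem_append.mp hx with h | h
  exacts [hlT x h, hlT' x h]

theorem inv_mem_wordBall {T : Set K} {r : ℝ} {g : K}
    (hg : g ∈ wordBall T r) : g⁻¹ ∈ wordBall T r := by
  obtain ⟨l, hl, hlT, rfl⟩ := hg
  refine ⟨(l.map fun x => x⁻¹).reverse, by simpa using hl, ?_, (List.prod_inv_reverse l).symm⟩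
  intro x hx
  rw [List.mem_reverse, List.mem_map] at hx
  obtain ⟨y, hy, rfl⟩ := hx
  rcases hlT y hy with h | h
  · exact Or.inr (by simpa using h)
  · exact Or.inl h

theorem wordBall_mono {T : Set K} {r s : ℝ} (h : r ≤ s) : wordBall T r ⊆ wordBall T s :=
  fun _ ⟨l, hl, hlT, hp⟩ => ⟨l, hl.trans h, hlT, hp⟩

end WordBall

variable {Γ : Type*} [Group Γ]

noncomputable def S2 (x : MonoidAlgebra ℂ Γ) : ℝ := ∑ g ∈ x.coeff.support, ‖x.coeff g‖ ^ 2

theorem S2_eq_sum {x : MonoidAlgebra ℂ Γ} {s : Finset Γ} (h : x.coeff.support ⊆ s) :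
    S2 x = ∑ g ∈ s, ‖x.coeff g‖ ^ 2 :=
  Finset.sum_subset h fun g _ hg => by simp [Finsupp.notMem_support_iff.mp hg]

theorem S2_nonneg (x : MonoidAlgebra ℂ Γ) : 0 ≤ S2 x :=
  Finset.sum_nonneg fun _ _ => sq_nonneg _

theorem N2_eq_sqrt (x : MonoidAlgebra ℂ Γ) : groupAlgNorm2 x = Real.sqrt (S2 x) := by
  simp [groupAlgNorm2, S2]

theorem N2_nonneg (x : MonoidAlgebra ℂ Γ) : 0 ≤ groupAlgNorm2 x := by
  rw [N2_eq_sqrt]; exact Real.sqrt_nonneg _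

theorem N2_sq (x : MonoidAlgebra ℂ Γ) : groupAlgNorm2 x ^ 2 = S2 x := by
  rw [N2_eq_sqrt]; exact Real.sq_sqrt (S2_nonneg x)

theorem N2_zero : groupAlgNorm2 (0 : MonoidAlgebra ℂ Γ) = 0 := by
  simp [groupAlgNorm2]

theorem N2_eq_zero {x : MonoidAlgebra ℂ Γ} (h : groupAlgNorm2 x = 0) : x = 0 := by
  rw [N2_eq_sqrt] at h
  have h2 : S2 x = 0 := le_antisymm (Real.sqrt_eq_zero'.mp h) (S2_nonneg x)
  have h3 := (Finset.sum_eq_zero_iff_of_nonneg (fun g _ => sq_nonneg ‖x.coeff g‖)).mp h2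
  rw [← MonoidAlgebra.coeff_eq_zero, ← Finsupp.support_eq_empty, Finset.eq_empty_iff_forall_notMem]
  intro g hg
  exact Finsupp.mem_support_iff.mp hg (by simpa using pow_eq_zero_iff (n := 2) two_ne_zero |>.mp (h3 g hg))

noncomputable def eucl (s : Finset Γ) (x : MonoidAlgebra ℂ Γ) : EuclideanSpace ℂ s :=
  WithLp.toLp 2 (fun i => x.coeff i)

theorem eucl_add (s : Finset Γ) (x y : MonoidAlgebra ℂ Γ) :
    eucl s (x + y) = eucl s x + eucl s y := by
  unfold eucl
  rw [← WithLp.toLp_add]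
  congr 1

theorem norm_eucl {s : Finset Γ} {x : MonoidAlgebra ℂ Γ} (h : x.coeff.support ⊆ s) :
    ‖eucl s x‖ = groupAlgNorm2 x := by
  rw [EuclideanSpace.norm_eq, N2_eq_sqrt, S2_eq_sum h, ← Finset.sum_coe_sort s (fun g => ‖x.coeff g‖ ^ 2)]
  rfl

theorem inner_eucl (s : Finset Γ) (x y : MonoidAlgebra ℂ Γ) :
    (inner ℂ (eucl s x) (eucl s y) : ℂ) = ∑ g ∈ s, (starRingEnd ℂ) (x.coeff g) * y.coeff g := by
  simp only [PiLp.inner_apply, RCLike.inner_apply']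
  rw [← Finset.sum_coe_sort s (fun g => (starRingEnd ℂ) (x.coeff g) * y.coeff g)]
  rfl

theorem N2_add_le (x y : MonoidAlgebra ℂ Γ) :
    groupAlgNorm2 (x + y) ≤ groupAlgNorm2 x + groupAlgNorm2 y := by
  classical
  set s := x.coeff.support ∪ y.coeff.support with hs
  have hx : x.coeff.support ⊆ s := Finset.subset_union_left
  have hy : y.coeff.support ⊆ s := Finset.subset_union_right
  have hxy : (x + y).coeff.support ⊆ s := Finsupp.support_add
  calc groupAlgNorm2 (x + y) = ‖eucl s (x + y)‖ := (norm_eucl hxy).symm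
    _ = ‖eucl s x + eucl s y‖ := by rw [eucl_add]
    _ ≤ ‖eucl s x‖ + ‖eucl s y‖ := norm_add_le _ _
    _ = _ := by rw [norm_eucl hx, norm_eucl hy]

section InnerP

variable [DecidableEq Γ]

noncomputable def Ip (x y : MonoidAlgebra ℂ Γ) : ℂ :=
  ∑ g ∈ x.coeff.support ∪ y.coeff.support, (starRingEnd ℂ) (x.coeff g) * y.coeff g

theorem Ip_eq_sum {x y : MonoidAlgebra ℂ Γ} {s : Finset Γ}
    (h : x.coeff.support ∪ y.coeff.support ⊆ s) :
    Ip x y = ∑ g ∈ s, (starRingEnd ℂ) (x.coeff g) * y.coeff g :=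
  Finset.sum_subset h fun g _ hg => by
    have : x.coeff g = 0 := Finsupp.notMem_support_iff.mp fun hc => hg (Finset.mem_union_left _ hc)
    simp [this]

theorem Ip_eq_inner {x y : MonoidAlgebra ℂ Γ} {s : Finset Γ}
    (h : x.coeff.support ∪ y.coeff.support ⊆ s) :
    Ip x y = inner ℂ (eucl s x) (eucl s y) := by
  rw [inner_eucl, Ip_eq_sum h]

theorem Ip_self (x : MonoidAlgebra ℂ Γ) : Ip x x = ((groupAlgNorm2 x ^ 2 : ℝ) : ℂ) := by
  classical
  rw [Ip_eq_inner (s := x.coeff.support ∪ x.coeff.support) (by simp), inner_self_eq_norm_sq_to_K,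
    norm_eucl (s := x.coeff.support ∪ x.coeff.support) (by simp)]
  norm_cast

theorem norm_Ip_le (x y : MonoidAlgebra ℂ Γ) :
    ‖Ip x y‖ ≤ groupAlgNorm2 x * groupAlgNorm2 y := by
  set s := x.coeff.support ∪ y.coeff.support with hs
  rw [Ip_eq_inner (subset_refl s)]
  refine (norm_inner_le_norm _ _).trans ?_
  rw [norm_eucl (s := s) Finset.subset_union_left, norm_eucl (s := s) Finset.subset_union_right]

end InnerP

theorem N2_smul (c : ℂ) (y : MonoidAlgebra ℂ Γ) :
    groupAlgNorm2 (c • y) = ‖c‖ * groupAlgNorm2 y := by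
  rw [N2_eq_sqrt, N2_eq_sqrt, S2_eq_sum (x := c • y) (Finsupp.support_smul (b := c) (g := y.coeff))]
  have : ∀ g ∈ y.coeff.support, ‖(c • y).coeff g‖ ^ 2 = ‖c‖ ^ 2 * ‖y.coeff g‖ ^ 2 := by
    intro g _
    rw [MonoidAlgebra.coeff_smul_apply, smul_eq_mul, norm_mul, mul_pow]
  rw [Finset.sum_congr rfl this, ← Finset.mul_sum,
    Real.sqrt_mul (sq_nonneg _), Real.sqrt_sq (norm_nonneg c), S2]

theorem N2_single_mul (a : Γ) (b : ℂ) (y : MonoidAlgebra ℂ Γ) :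
    groupAlgNorm2 (MonoidAlgebra.single a b * y) = ‖b‖ * groupAlgNorm2 y := by
  classical
  rw [N2_eq_sqrt, N2_eq_sqrt, S2_eq_sum (MonoidAlgebra.support_coeff_single_mul_subset y b a),
    Finset.sum_image (fun p _ q _ h => mul_left_cancel h)]
  have : ∀ g ∈ y.coeff.support,
      ‖(MonoidAlgebra.single a b * y).coeff (a * g)‖ ^ 2 = ‖b‖ ^ 2 * ‖y.coeff g‖ ^ 2 := by
    intro g _
    rw [MonoidAlgebra.coeff_single_mul_apply, inv_mul_cancel_left, norm_mul, mul_pow]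
  rw [Finset.sum_congr rfl this, ← Finset.mul_sum,
    Real.sqrt_mul (sq_nonneg _), Real.sqrt_sq (norm_nonneg b), S2]

theorem N2_sum_le {ι : Type*} (t : Finset ι) (f : ι → MonoidAlgebra ℂ Γ) :
    groupAlgNorm2 (∑ i ∈ t, f i) ≤ ∑ i ∈ t, groupAlgNorm2 (f i) := by
  classical
  induction t using Finset.induction_on with
  | empty => simp [N2_zero]
  | insert _ _ h ih =>
    rw [Finset.sum_insert h, Finset.sum_insert h]
    exact (N2_add_le _ _).trans (by linarith)

theorem N1_nonneg (x : MonoidAlgebra ℂ Γ) : 0 ≤ groupAlgNorm1 x :=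
  Finset.sum_nonneg fun _ _ => norm_nonneg _

theorem young (x y : MonoidAlgebra ℂ Γ) :
    groupAlgNorm2 (x * y) ≤ groupAlgNorm1 x * groupAlgNorm2 y := by
  have hx : x * y = ∑ a ∈ x.coeff.support, MonoidAlgebra.single a (x.coeff a) * y := by
    rw [← Finset.sum_mul]
    congr 1
    conv_lhs => rw [← MonoidAlgebra.sum_coeff_single x]
    rfl
  rw [hx]
  refine (N2_sum_le _ _).trans ?_
  rw [groupAlgNorm1, Finset.sum_mul]
  apply Finset.sum_congr rfl ?_ |>.le
  intro a _
  rw [N2_single_mul]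

theorem zero_mem_opSet (x : MonoidAlgebra ℂ Γ) :
    (0 : ℝ) ∈ {r : ℝ | ∃ y : MonoidAlgebra ℂ Γ, groupAlgNorm2 y ≤ 1 ∧ r = groupAlgNorm2 (x * y)} :=
  ⟨0, by rw [N2_zero]; exact zero_le_one, by rw [mul_zero, N2_zero]⟩

theorem bddAbove_opSet (x : MonoidAlgebra ℂ Γ) :
    BddAbove {r : ℝ | ∃ y : MonoidAlgebra ℂ Γ, groupAlgNorm2 y ≤ 1 ∧ r = groupAlgNorm2 (x * y)} := by
  refine ⟨groupAlgNorm1 x, ?_⟩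
  rintro r ⟨y, hy, rfl⟩
  refine (young x y).trans ?_
  calc groupAlgNorm1 x * groupAlgNorm2 y ≤ groupAlgNorm1 x * 1 :=
        mul_le_mul_of_nonneg_left hy (N1_nonneg x)
    _ = groupAlgNorm1 x := mul_one _

theorem op_nonneg (x : MonoidAlgebra ℂ Γ) : 0 ≤ groupAlgOpNorm x :=
  le_csSup (bddAbove_opSet x) (zero_mem_opSet x)

theorem le_op {x y : MonoidAlgebra ℂ Γ} (hy : groupAlgNorm2 y ≤ 1) :
    groupAlgNorm2 (x * y) ≤ groupAlgOpNorm x :=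
  le_csSup (bddAbove_opSet x) ⟨y, hy, rfl⟩

theorem op_le {x : MonoidAlgebra ℂ Γ} {C : ℝ}
    (h : ∀ y : MonoidAlgebra ℂ Γ, groupAlgNorm2 y ≤ 1 → groupAlgNorm2 (x * y) ≤ C) :
    groupAlgOpNorm x ≤ C := by
  refine csSup_le ⟨0, zero_mem_opSet x⟩ ?_
  rintro r ⟨y, hy, rfl⟩
  exact h y hy

theorem op_bound (x y : MonoidAlgebra ℂ Γ) :
    groupAlgNorm2 (x * y) ≤ groupAlgOpNorm x * groupAlgNorm2 y := by
  by_cases h : groupAlgNorm2 y = 0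
  · rw [N2_eq_zero h]
    simp [N2_zero, mul_zero]
  · have hpos : 0 < groupAlgNorm2 y := lt_of_le_of_ne (N2_nonneg y) (Ne.symm h)
    set c : ℂ := (((groupAlgNorm2 y)⁻¹ : ℝ) : ℂ) with hc
    have h1 : groupAlgNorm2 (c • y) ≤ 1 := by
      rw [N2_smul, hc, Complex.norm_real, Real.norm_eq_abs,
        abs_of_nonneg (inv_nonneg.mpr hpos.le), inv_mul_cancel₀ h]
    have h2 := le_op (x := x) h1
    rw [mul_smul_comm, N2_smul, hc, Complex.norm_real, Real.norm_eq_abs,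
      abs_of_nonneg (inv_nonneg.mpr hpos.le)] at h2
    rw [mul_comm (groupAlgOpNorm x)]
    exact (inv_mul_le_iff₀ hpos).mp h2

theorem op_mul_le (a b : MonoidAlgebra ℂ Γ) :
    groupAlgOpNorm (a * b) ≤ groupAlgOpNorm a * groupAlgOpNorm b := by
  refine op_le fun y hy => ?_
  rw [mul_assoc]
  calc groupAlgNorm2 (a * (b * y)) ≤ groupAlgOpNorm a * groupAlgNorm2 (b * y) := op_bound a _
    _ ≤ groupAlgOpNorm a * (groupAlgOpNorm b * groupAlgNorm2 y) :=
        mul_le_mul_of_nonneg_left (op_bound b y) (op_nonneg a)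
    _ ≤ groupAlgOpNorm a * (groupAlgOpNorm b * 1) := by
        have := mul_le_mul_of_nonneg_left hy (op_nonneg b)
        exact mul_le_mul_of_nonneg_left this (op_nonneg a)
    _ = groupAlgOpNorm a * groupAlgOpNorm b := by ring

theorem N2_one : groupAlgNorm2 (1 : MonoidAlgebra ℂ Γ) = 1 := by
  rw [MonoidAlgebra.one_def, N2_eq_sqrt,
    S2_eq_sum (x := MonoidAlgebra.single 1 1) (s := {1}) Finsupp.support_single_subset]
  simp

theorem N2_le_op (x : MonoidAlgebra ℂ Γ) : groupAlgNorm2 x ≤ groupAlgOpNorm x := by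
  have := le_op (x := x) (y := 1) (le_of_eq N2_one)
  rwa [mul_one] at this

theorem op_pow_le (a : MonoidAlgebra ℂ Γ) : ∀ n : ℕ, groupAlgOpNorm (a ^ n) ≤ groupAlgOpNorm a ^ n
  | 0 => by
    rw [pow_zero, pow_zero]
    exact op_le fun y hy => by rwa [one_mul]
  | n + 1 => by
    rw [pow_succ, pow_succ]
    exact (op_mul_le _ _).trans
      (mul_le_mul_of_nonneg_right (op_pow_le a n) (op_nonneg a))

noncomputable def st (x : MonoidAlgebra ℂ Γ) : MonoidAlgebra ℂ Γ :=
  MonoidAlgebra.ofCoeff (Finsupp.mapDomain (fun g : Γ => g⁻¹) (Finsupp.mapRange (starRingEnd ℂ) (map_zero _) x.coeff))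

theorem st_apply' (x : MonoidAlgebra ℂ Γ) (g : Γ) :
    (st x).coeff ((fun h : Γ => h⁻¹) g) = (starRingEnd ℂ) (x.coeff g) := by
  rw [st, MonoidAlgebra.coeff_ofCoeff, Finsupp.mapDomain_apply (fun a b h => inv_injective h), Finsupp.mapRange_apply]

theorem st_apply (x : MonoidAlgebra ℂ Γ) (g : Γ) :
    (st x).coeff g = (starRingEnd ℂ) (x.coeff g⁻¹) := by
  have := st_apply' x g⁻¹
  rwa [show (fun h : Γ => h⁻¹) g⁻¹ = g from inv_inv g] at this

theorem st_zero : st (0 : MonoidAlgebra ℂ Γ) = 0 := by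
  ext g; simp [st_apply]

theorem st_add (x y : MonoidAlgebra ℂ Γ) : st (x + y) = st x + st y := by
  ext g
  rw [st_apply, MonoidAlgebra.coeff_add, Finsupp.add_apply, MonoidAlgebra.coeff_add, Finsupp.add_apply, st_apply, st_apply, map_add]

theorem st_st (x : MonoidAlgebra ℂ Γ) : st (st x) = x := by
  ext g; simp [st_apply]

theorem st_single (a : Γ) (b : ℂ) :
    st (MonoidAlgebra.single a b) = MonoidAlgebra.single a⁻¹ ((starRingEnd ℂ) b) := by
  ext g
  rw [st_apply]
  by_cases h : a = g⁻¹
  · subst h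
    simp [MonoidAlgebra.coeff_single, Finsupp.single_apply]
  · have h' : a⁻¹ ≠ g := fun hc => h (by rw [← hc]; simp)
    simp [MonoidAlgebra.coeff_single, Finsupp.single_apply, h, h']

theorem st_single_mul (a : Γ) (b : ℂ) (v : MonoidAlgebra ℂ Γ) :
    st (MonoidAlgebra.single a b * v) = st v * st (MonoidAlgebra.single a b) := by
  rw [st_single]
  ext g
  rw [st_apply, MonoidAlgebra.coeff_single_mul_apply, MonoidAlgebra.coeff_mul_single_apply, st_apply,
    map_mul]
  rw [inv_inv, mul_inv_rev]
  ring

theorem st_mul (u v : MonoidAlgebra ℂ Γ) : st (u * v) = st v * st u := by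
  induction u using MonoidAlgebra.induction with
  | zero => rw [zero_mul, st_zero, mul_zero]
  | single_add a b f _ _ ih =>
    rw [add_mul, st_add, st_add, mul_add, ih, st_single_mul]

theorem st_pow {a : MonoidAlgebra ℂ Γ} (ha : st a = a) : ∀ n : ℕ, st (a ^ n) = a ^ n
  | 0 => by
    rw [pow_zero, MonoidAlgebra.one_def, st_single]
    simp
  | n + 1 => by
    rw [pow_succ, st_mul, st_pow ha n, ha, ← pow_succ', ← pow_succ]

section Adjoint

variable [DecidableEq Γ]

theorem Ip_zero_left (w : MonoidAlgebra ℂ Γ) : Ip 0 w = 0 := by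
  simp [Ip]

theorem Ip_add_left (u v w : MonoidAlgebra ℂ Γ) : Ip (u + v) w = Ip u w + Ip v w := by
  set s := u.coeff.support ∪ v.coeff.support ∪ (u + v).coeff.support ∪ w.coeff.support with hs
  have h1 : u.coeff.support ∪ w.coeff.support ⊆ s := by
    intro g hg
    rcases Finset.mem_union.mp hg with h | h
    · exact Finset.mem_union_left _ (Finset.mem_union_left _ (Finset.mem_union_left _ h))
    · exact Finset.mem_union_right _ h
  have h2 : v.coeff.support ∪ w.coeff.support ⊆ s := by
    intro g hg
    rcases Finset.mem_union.mp hg with h | h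
    · exact Finset.mem_union_left _ (Finset.mem_union_left _ (Finset.mem_union_right _ h))
    · exact Finset.mem_union_right _ h
  have h3 : (u + v).coeff.support ∪ w.coeff.support ⊆ s := by
    intro g hg
    rcases Finset.mem_union.mp hg with h | h
    · exact Finset.mem_union_left _ (Finset.mem_union_right _ h)
    · exact Finset.mem_union_right _ h
  rw [Ip_eq_sum h1, Ip_eq_sum h2, Ip_eq_sum h3, ← Finset.sum_add_distrib]
  apply Finset.sum_congr rfl
  intro g _
  rw [MonoidAlgebra.coeff_add, Finsupp.add_apply, map_add, add_mul]

theorem Ip_add_right (u v w : MonoidAlgebra ℂ Γ) : Ip u (v + w) = Ip u v + Ip u w := by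
  set s := u.coeff.support ∪ v.coeff.support ∪ w.coeff.support ∪ (v + w).coeff.support with hs
  have h1 : u.coeff.support ∪ v.coeff.support ⊆ s := by
    intro g hg
    rcases Finset.mem_union.mp hg with h | h
    · exact Finset.mem_union_left _ (Finset.mem_union_left _ (Finset.mem_union_left _ h))
    · exact Finset.mem_union_left _ (Finset.mem_union_left _ (Finset.mem_union_right _ h))
  have h2 : u.coeff.support ∪ w.coeff.support ⊆ s := by
    intro g hg
    rcases Finset.mem_union.mp hg with h | h
    · exact Finset.mem_union_left _ (Finset.mem_union_left _ (Finset.mem_union_left _ h))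
    · exact Finset.mem_union_left _ (Finset.mem_union_right _ h)
  have h3 : u.coeff.support ∪ (v + w).coeff.support ⊆ s := by
    intro g hg
    rcases Finset.mem_union.mp hg with h | h
    · exact Finset.mem_union_left _ (Finset.mem_union_left _ (Finset.mem_union_left _ h))
    · exact Finset.mem_union_right _ h
  rw [Ip_eq_sum h1, Ip_eq_sum h2, Ip_eq_sum h3, ← Finset.sum_add_distrib]
  apply Finset.sum_congr rfl
  intro g _
  rw [MonoidAlgebra.coeff_add, Finsupp.add_apply, mul_add]

theorem Ip_single_adj (a : Γ) (b : ℂ) (y z : MonoidAlgebra ℂ Γ) :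
    Ip (MonoidAlgebra.single a b * y) z
      = Ip y (MonoidAlgebra.single a⁻¹ ((starRingEnd ℂ) b) * z) := by
  set s₂ : Finset Γ := y.coeff.support ∪ z.coeff.support.image (a⁻¹ * ·) with hs2
  have h2 : y.coeff.support ∪ (MonoidAlgebra.single a⁻¹ ((starRingEnd ℂ) b) * z).coeff.support ⊆ s₂ :=
    Finset.union_subset Finset.subset_union_left
      ((MonoidAlgebra.support_coeff_single_mul_subset z _ a⁻¹).trans Finset.subset_union_right)
  have h1 : (MonoidAlgebra.single a b * y).coeff.support ∪ z.coeff.support ⊆ s₂.image (a * ·) := by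
    apply Finset.union_subset
    · exact (MonoidAlgebra.support_coeff_single_mul_subset y b a).trans
        (Finset.image_subset_image Finset.subset_union_left)
    · intro g hg
      refine Finset.mem_image.mpr ⟨a⁻¹ * g,
        Finset.mem_union_right _ (Finset.mem_image.mpr ⟨g, hg, rfl⟩), ?_⟩
      simp
  rw [Ip_eq_sum h1, Ip_eq_sum h2, Finset.sum_image (fun p _ q _ h => mul_left_cancel h)]
  apply Finset.sum_congr rfl
  intro h _
  rw [MonoidAlgebra.coeff_single_mul_apply, MonoidAlgebra.coeff_single_mul_apply, map_mul,
    inv_mul_cancel_left, inv_inv]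
  ring

theorem Ip_adjoint (x y z : MonoidAlgebra ℂ Γ) : Ip (x * y) z = Ip y (st x * z) := by
  induction x using MonoidAlgebra.induction with
  | zero => rw [zero_mul, st_zero, zero_mul, Ip_zero_left]; simp [Ip]
  | single_add a b f _ _ ih =>
    rw [add_mul, Ip_add_left, ih, st_add, add_mul, Ip_add_right, st_single, Ip_single_adj]

end Adjoint

theorem sq_le_helper {t C : ℝ} (ht : 0 ≤ t) (hC : 0 ≤ C) (h : t ^ 2 ≤ C * t) : t ≤ C := by
  rcases eq_or_lt_of_le ht with h0 | h0
  · rw [← h0]; exact hC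
  · nlinarith

theorem op_sq_le (x : MonoidAlgebra ℂ Γ) :
    groupAlgOpNorm x ^ 2 ≤ groupAlgOpNorm (st x * x) := by
  classical
  have key : ∀ y : MonoidAlgebra ℂ Γ, groupAlgNorm2 y ≤ 1 →
      groupAlgNorm2 (x * y) ≤ Real.sqrt (groupAlgOpNorm (st x * x)) := by
    intro y hy
    have hy0 : 0 ≤ groupAlgNorm2 y := N2_nonneg y
    have h1 : groupAlgNorm2 (x * y) ^ 2 = ‖Ip (x * y) (x * y)‖ := by
      rw [Ip_self]
      rw [Complex.norm_real, Real.norm_eq_abs, abs_of_nonneg (sq_nonneg _)]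
    have h2 : ‖Ip (x * y) (x * y)‖ ≤ groupAlgNorm2 y * groupAlgNorm2 (st x * x * y) := by
      rw [Ip_adjoint, ← mul_assoc]
      exact norm_Ip_le _ _
    have h3 : groupAlgNorm2 (st x * x * y) ≤ groupAlgOpNorm (st x * x) :=
      (op_bound _ _).trans (by
        calc groupAlgOpNorm (st x * x) * groupAlgNorm2 y
            ≤ groupAlgOpNorm (st x * x) * 1 := mul_le_mul_of_nonneg_left hy (op_nonneg _)
          _ = _ := mul_one _)
    have h4 : groupAlgNorm2 (x * y) ^ 2 ≤ groupAlgOpNorm (st x * x) := by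
      calc groupAlgNorm2 (x * y) ^ 2 ≤ groupAlgNorm2 y * groupAlgNorm2 (st x * x * y) :=
            h1.le.trans h2
        _ ≤ 1 * groupAlgOpNorm (st x * x) := by
            refine mul_le_mul hy h3 (N2_nonneg _) zero_le_one
        _ = _ := one_mul _
    exact (Real.le_sqrt (N2_nonneg _) (op_nonneg _)).mpr h4
  have h5 : groupAlgOpNorm x ≤ Real.sqrt (groupAlgOpNorm (st x * x)) := op_le key
  calc groupAlgOpNorm x ^ 2 ≤ Real.sqrt (groupAlgOpNorm (st x * x)) ^ 2 :=
        pow_le_pow_left₀ (op_nonneg x) h5 2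
    _ = groupAlgOpNorm (st x * x) := Real.sq_sqrt (op_nonneg _)

theorem op_st_le (x : MonoidAlgebra ℂ Γ) : groupAlgOpNorm (st x) ≤ groupAlgOpNorm x := by
  classical
  refine op_le fun y hy => ?_
  set t := groupAlgNorm2 (st x * y) with hts
  have h1 : t ^ 2 = ‖Ip (st x * y) (st x * y)‖ := by
    rw [Ip_self, Complex.norm_real, Real.norm_eq_abs, abs_of_nonneg (sq_nonneg _)]
  have h2 : ‖Ip (st x * y) (st x * y)‖ ≤ groupAlgNorm2 y * groupAlgNorm2 (x * (st x * y)) := by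
    rw [Ip_adjoint, st_st]
    exact norm_Ip_le _ _
  have h3 : groupAlgNorm2 (x * (st x * y)) ≤ groupAlgOpNorm x * t := op_bound _ _
  have h4 : t ^ 2 ≤ groupAlgOpNorm x * t := by
    calc t ^ 2 ≤ groupAlgNorm2 y * (groupAlgOpNorm x * t) :=
          h1.le.trans (h2.trans (mul_le_mul_of_nonneg_left h3 (N2_nonneg y)))
      _ ≤ 1 * (groupAlgOpNorm x * t) := by
          refine mul_le_mul_of_nonneg_right hy (mul_nonneg (op_nonneg x) (N2_nonneg _))
      _ = _ := one_mul _
  exact sq_le_helper (N2_nonneg _) (op_nonneg x) h4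

theorem op_two_pow_le {a : MonoidAlgebra ℂ Γ} (ha : st a = a) :
    ∀ k : ℕ, groupAlgOpNorm a ^ (2 ^ k) ≤ groupAlgOpNorm (a ^ (2 ^ k))
  | 0 => by rw [pow_zero, pow_one, pow_one]
  | k + 1 => by
    have h1 : (2 : ℕ) ^ (k + 1) = 2 ^ k * 2 := by ring
    rw [h1, pow_mul, pow_mul]
    calc (groupAlgOpNorm a ^ 2 ^ k) ^ 2 ≤ groupAlgOpNorm (a ^ 2 ^ k) ^ 2 :=
          pow_le_pow_left₀ (pow_nonneg (op_nonneg a) _) (op_two_pow_le ha k) 2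
      _ ≤ groupAlgOpNorm (st (a ^ 2 ^ k) * a ^ 2 ^ k) := op_sq_le _
      _ = groupAlgOpNorm ((a ^ 2 ^ k) ^ 2) := by rw [st_pow ha, sq]

theorem op_pow_le_op_pow {a : MonoidAlgebra ℂ Γ} (ha : st a = a) {m : ℕ} (hm : 1 ≤ m) :
    groupAlgOpNorm a ^ m ≤ groupAlgOpNorm (a ^ m) := by
  by_cases h0 : groupAlgOpNorm a = 0
  · rw [h0, zero_pow (by omega)]
    exact op_nonneg _
  · have hpos : 0 < groupAlgOpNorm a := lt_of_le_of_ne (op_nonneg a) (Ne.symm h0)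
    have hm2 : m ≤ 2 ^ m := Nat.le_of_lt (Nat.lt_two_pow_self (n := m))
    set n := 2 ^ m - m with hn
    have hmn : 2 ^ m = m + n := by omega
    have h1 : groupAlgOpNorm a ^ (2 ^ m) ≤ groupAlgOpNorm (a ^ (2 ^ m)) := op_two_pow_le ha m
    have h2 : groupAlgOpNorm (a ^ (2 ^ m)) ≤ groupAlgOpNorm (a ^ m) * groupAlgOpNorm a ^ n := by
      rw [hmn, pow_add]
      exact (op_mul_le _ _).trans
        (mul_le_mul_of_nonneg_left (op_pow_le a n) (op_nonneg _))
    have h3 : groupAlgOpNorm a ^ m * groupAlgOpNorm a ^ n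
        ≤ groupAlgOpNorm (a ^ m) * groupAlgOpNorm a ^ n := by
      rw [← pow_add, ← hmn]
      exact h1.trans h2
    exact le_of_mul_le_mul_right h3 (pow_pos hpos n)

section Hom

variable {G : Type*} [Group G] (φ : Γ →* G)

theorem Gm_mul (u v : MonoidAlgebra ℂ Γ) :
    groupAlgMap φ (u * v) = groupAlgMap φ u * groupAlgMap φ v :=
  MonoidAlgebra.mapDomain_mul φ u v

theorem Gm_one : groupAlgMap φ (1 : MonoidAlgebra ℂ Γ) = 1 := by
  rw [MonoidAlgebra.one_def, MonoidAlgebra.one_def, groupAlgMap, MonoidAlgebra.coeff_single, Finsupp.mapDomain_single, MonoidAlgebra.ofCoeff_single,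
    map_one]

theorem Gm_pow (u : MonoidAlgebra ℂ Γ) : ∀ n : ℕ, groupAlgMap φ (u ^ n) = groupAlgMap φ u ^ n
  | 0 => by rw [pow_zero, pow_zero, Gm_one]
  | n + 1 => by rw [pow_succ, pow_succ, Gm_mul, Gm_pow u n]

theorem Gm_st (u : MonoidAlgebra ℂ Γ) : groupAlgMap φ (st u) = st (groupAlgMap φ u) := by
  unfold groupAlgMap st
  simp only [MonoidAlgebra.coeff_ofCoeff]
  rw [← Finsupp.mapDomain_comp]
  have hcomp : (⇑φ ∘ fun g : Γ => g⁻¹) = (fun g : G => g⁻¹) ∘ ⇑φ :=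
    funext fun g => map_inv φ g
  rw [hcomp, Finsupp.mapDomain_comp,
    Finsupp.mapDomain_mapRange _ _ _ _ (fun a b => map_add (starRingEnd ℂ) a b)]

theorem N2_Gm {u : MonoidAlgebra ℂ Γ} (h : Set.InjOn φ ↑u.coeff.support) :
    groupAlgNorm2 (groupAlgMap φ u) = groupAlgNorm2 u := by
  classical
  rw [N2_eq_sqrt, N2_eq_sqrt]
  congr 1
  unfold groupAlgMap
  rw [S2_eq_sum (x := MonoidAlgebra.ofCoeff (Finsupp.mapDomain φ u.coeff)) (Finsupp.mapDomain_support (f := ⇑φ) (s := u.coeff)),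
    Finset.sum_image (fun p hp q hq hpq => h hp hq hpq)]
  apply Finset.sum_congr rfl
  intro g hg
  rw [MonoidAlgebra.coeff_ofCoeff, Finsupp.mapDomain_apply' ↑u.coeff.support u.coeff (subset_refl _) h hg]

end Hom

theorem supp_mul_ball {T : Set Γ} {u v : MonoidAlgebra ℂ Γ} {r s : ℝ}
    (hu : ↑u.coeff.support ⊆ wordBall T r) (hv : ↑v.coeff.support ⊆ wordBall T s) :
    ↑(u * v).coeff.support ⊆ wordBall T (r + s) := by
  classical
  intro g hg
  have h1 : g ∈ u.coeff.support * v.coeff.support := MonoidAlgebra.support_coeff_mul_subset u v hg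
  rw [Finset.mem_mul] at h1
  obtain ⟨p, hp, q, hq, rfl⟩ := h1
  exact mul_mem_wordBall (hu hp) (hv hq)

theorem supp_st_ball {T : Set Γ} {u : MonoidAlgebra ℂ Γ} {r : ℝ}
    (hu : ↑u.coeff.support ⊆ wordBall T r) :
    ↑(st u).coeff.support ⊆ wordBall T r := by
  intro g hg
  have h1 : (st u).coeff g ≠ 0 := Finsupp.mem_support_iff.mp hg
  rw [st_apply] at h1
  have h2 : g⁻¹ ∈ u.coeff.support := Finsupp.mem_support_iff.mpr fun hc => h1 (by rw [hc]; exact map_zero _)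
  have := inv_mem_wordBall (hu h2)
  rwa [inv_inv] at this

theorem supp_one_ball {T : Set Γ} {r : ℝ} (hr : 0 ≤ r) :
    ↑(1 : MonoidAlgebra ℂ Γ).coeff.support ⊆ wordBall T r := by
  intro g hg
  rw [MonoidAlgebra.one_def] at hg
  have : g ∈ ({1} : Finset Γ) := Finsupp.support_single_subset hg
  rw [Finset.mem_singleton] at this
  rw [this]
  exact one_mem_wordBall hr

end RDAux

/-- The key rapid-decay estimate: if `φ : Γ → G` is injective on `B_Y(2mR)` and maps
`B_Y(2mR)` into `B_X(r')`, and `(G, X)` has rapid decay with polynomial `P`, then for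
every `x ∈ ℂΓ` supported on `B_Y(R)` one has `‖φ(x)‖^{2m} ≤ P(r')·‖x‖^{2m}`. -/
theorem rapidDecay_norm_estimate {Γ G : Type*} [Group Γ] [Group G]
    [Countable Γ] [Countable G]
    (Y : Set Γ) (hYfin : Y.Finite) (hYgen : Subgroup.closure Y = ⊤)
    (X : Set G) (hXfin : X.Finite) (hXgen : Subgroup.closure X = ⊤)
    (P : Polynomial ℝ) (hRD : RapidDecayWith X P)
    (R m : ℕ) (hR : 1 ≤ R) (hm : 1 ≤ m) (r' : ℕ)
    (φ : Γ →* G)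
    (hinj : Set.InjOn φ (wordBall Y (2 * m * R)))
    (himg : ⇑φ '' wordBall Y (2 * m * R) ⊆ wordBall X r')
    (x : MonoidAlgebra ℂ Γ) (hx : (↑x.coeff.support : Set Γ) ⊆ wordBall Y R) :
    groupAlgOpNorm (groupAlgMap φ x) ^ (2 * m) ≤
      P.eval (r' : ℝ) * groupAlgOpNorm x ^ (2 * m) := by
  classical
  open RDAux in
  set z := groupAlgMap φ x with hz
  set w := st x * x with hw
  -- P(r') ≥ 1
  have hP1 : (1 : ℝ) ≤ P.eval (r' : ℝ) := by
    have h1 := hRD r' 1 (supp_one_ball (Nat.cast_nonneg r'))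
    rw [N2_one, mul_one] at h1
    exact le_trans (by rw [← N2_one (Γ := G)]; exact N2_le_op 1) h1
  have hP0 : (0 : ℝ) ≤ P.eval (r' : ℝ) := le_trans zero_le_one hP1
  -- supports
  have hstx : ↑(st x).coeff.support ⊆ wordBall Y (R : ℝ) := supp_st_ball hx
  have hwsupp : ∀ k : ℕ, ↑((w ^ k).coeff.support) ⊆ wordBall Y (2 * k * (R : ℝ)) := by
    intro k
    induction k with
    | zero =>
      rw [pow_zero]
      refine (supp_one_ball (le_of_eq (by push_cast; ring))).trans (subset_refl _)
    | succ k ih =>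
      rw [pow_succ]
      have h1 : ↑(w ^ k * w).coeff.support ⊆ wordBall Y (2 * k * (R : ℝ) + ((R : ℝ) + (R : ℝ))) :=
        supp_mul_ball ih (supp_mul_ball hstx hx)
      refine h1.trans (wordBall_mono (le_of_eq (by push_cast; ring)))
  have hq : ↑((w ^ m).coeff.support) ⊆ wordBall Y (2 * m * (R : ℝ)) := hwsupp m
  have hinj' : Set.InjOn φ ↑((w ^ m).coeff.support) := hinj.mono hq
  have hzsupp : ↑((groupAlgMap φ (w ^ m)).coeff.support) ⊆ wordBall X (r' : ℝ) := by
    intro g hg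
    have h1 : g ∈ ((w ^ m).coeff.support.image φ) := Finsupp.mapDomain_support hg
    rw [Finset.mem_image] at h1
    obtain ⟨p, hp, rfl⟩ := h1
    exact himg ⟨p, hq hp, rfl⟩
  have key := hRD r' (groupAlgMap φ (w ^ m)) hzsupp
  -- identifications
  have ha : st z * z = groupAlgMap φ w := by rw [hw, Gm_mul, Gm_st]
  have hapow : (st z * z) ^ m = groupAlgMap φ (w ^ m) := by rw [ha, ← Gm_pow]
  have hsa : st (st z * z) = st z * z := by rw [st_mul, st_st]
  -- the chain
  have c1 : groupAlgOpNorm z ^ (2 * m) ≤ groupAlgOpNorm (st z * z) ^ m := by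
    rw [pow_mul]
    exact pow_le_pow_left₀ (sq_nonneg _) (op_sq_le z) m
  have c2 : groupAlgOpNorm (st z * z) ^ m ≤ groupAlgOpNorm ((st z * z) ^ m) :=
    op_pow_le_op_pow hsa hm
  have c4 : groupAlgNorm2 (groupAlgMap φ (w ^ m)) = groupAlgNorm2 (w ^ m) := N2_Gm φ hinj'
  have c5 : groupAlgNorm2 (w ^ m) ≤ groupAlgOpNorm (w ^ m) := N2_le_op _
  have c6 : groupAlgOpNorm (w ^ m) ≤ groupAlgOpNorm w ^ m := op_pow_le w m
  have c7 : groupAlgOpNorm w ≤ groupAlgOpNorm x ^ 2 := by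
    rw [hw, sq]
    exact (op_mul_le _ _).trans (mul_le_mul_of_nonneg_right (op_st_le x) (op_nonneg x))
  calc groupAlgOpNorm z ^ (2 * m)
      ≤ groupAlgOpNorm ((st z * z) ^ m) := c1.trans c2
    _ = groupAlgOpNorm (groupAlgMap φ (w ^ m)) := by rw [hapow]
    _ ≤ P.eval (r' : ℝ) * groupAlgNorm2 (groupAlgMap φ (w ^ m)) := key
    _ = P.eval (r' : ℝ) * groupAlgNorm2 (w ^ m) := by rw [c4]
    _ ≤ P.eval (r' : ℝ) * groupAlgOpNorm w ^ m :=
        mul_le_mul_of_nonneg_left (c5.trans c6) hP0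
    _ ≤ P.eval (r' : ℝ) * (groupAlgOpNorm x ^ 2) ^ m :=
        mul_le_mul_of_nonneg_left (pow_le_pow_left₀ (op_nonneg w) c7 m) hP0
    _ = P.eval (r' : ℝ) * groupAlgOpNorm x ^ (2 * m) := by rw [← pow_mul]
end

section
/- Let G be a countable group, Γ a countable group, and ι : G → Γ an injective group homomorphism such that Γ is existentially C*-residually-G with respect to ι. Then there exist a nonprincipal ultrafilter U on ℕ and group homomorphisms φ_k : Γ → G (k ∈ ℕ) with φ_k ∘ ι = id_G for all k, such that for every z ∈ ℂΓ the limsup along U of the bounded sequence (‖φ_k(z)‖)_{k∈ℕ} is at most ‖z‖, where the norms are the reduced operator norms on ℂG and ℂΓ respectively. -/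
open Filter Monoid

section Aux

open Pointwise

variable {Γ' : Type*} [Group Γ']

lemma groupAlgNorm2_smul (c : ℂ) (x : MonoidAlgebra ℂ Γ') :
    groupAlgNorm2 (c • x) = ‖c‖ * groupAlgNorm2 x := by
  rcases eq_or_ne c 0 with rfl | hc
  · simp [groupAlgNorm2]
  · unfold groupAlgNorm2
    rw [MonoidAlgebra.coeff_smul, Finsupp.support_smul_eq hc]
    have : ∀ g ∈ x.coeff.support, ‖(c • x.coeff) g‖ ^ 2
        = (‖c‖) ^ 2 * ‖x.coeff g‖ ^ 2 := by
      intro g _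
      rw [Finsupp.smul_apply, smul_eq_mul, norm_mul]
      ring
    rw [Finset.sum_congr rfl this, ← Finset.mul_sum, Real.sqrt_mul (by positivity),
      Real.sqrt_sq (by positivity)]

lemma groupAlgNorm1_smul (c : ℂ) (x : MonoidAlgebra ℂ Γ') :
    groupAlgNorm1 (c • x) = ‖c‖ * groupAlgNorm1 x := by
  rcases eq_or_ne c 0 with rfl | hc
  · simp [groupAlgNorm1]
  · unfold groupAlgNorm1
    rw [MonoidAlgebra.coeff_smul, Finsupp.support_smul_eq hc, Finset.mul_sum]
    refine Finset.sum_congr rfl fun g _ => ?_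
    rw [Finsupp.smul_apply, smul_eq_mul, norm_mul]

lemma groupAlgNorm2_zero : groupAlgNorm2 (0 : MonoidAlgebra ℂ Γ') = 0 := by
  simp [groupAlgNorm2]

lemma groupAlgOpNorm_zero : groupAlgOpNorm (0 : MonoidAlgebra ℂ Γ') = 0 := by
  have : {r : ℝ | ∃ y : MonoidAlgebra ℂ Γ', groupAlgNorm2 y ≤ 1
      ∧ r = groupAlgNorm2 ((0 : MonoidAlgebra ℂ Γ') * y)} = {0} := by
    ext r
    simp only [Set.mem_setOf_eq, Set.mem_singleton_iff, zero_mul, groupAlgNorm2_zero]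
    constructor
    · rintro ⟨y, _, rfl⟩; rfl
    · rintro rfl; exact ⟨0, by rw [groupAlgNorm2_zero]; norm_num, rfl⟩
  rw [groupAlgOpNorm, this, csSup_singleton]

lemma groupAlgOpNorm_nonneg (x : MonoidAlgebra ℂ Γ') : 0 ≤ groupAlgOpNorm x := by
  set A := {r : ℝ | ∃ y : MonoidAlgebra ℂ Γ', groupAlgNorm2 y ≤ 1
      ∧ r = groupAlgNorm2 (x * y)} with hA
  by_cases hb : BddAbove A
  · have h0 : (0 : ℝ) ∈ A :=
      ⟨0, by rw [groupAlgNorm2_zero]; norm_num, by rw [mul_zero, groupAlgNorm2_zero]⟩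
    exact le_csSup hb h0
  · rw [groupAlgOpNorm, ← hA, Real.sSup_of_not_bddAbove hb]

lemma groupAlgOpNorm_smul (c : ℂ) (x : MonoidAlgebra ℂ Γ') :
    groupAlgOpNorm (c • x) = ‖c‖ * groupAlgOpNorm x := by
  rcases eq_or_ne c 0 with rfl | hc
  · simp [groupAlgOpNorm_zero]
  · have hset : {r : ℝ | ∃ y : MonoidAlgebra ℂ Γ', groupAlgNorm2 y ≤ 1
        ∧ r = groupAlgNorm2 ((c • x) * y)}
      = (‖c‖) • {r : ℝ | ∃ y : MonoidAlgebra ℂ Γ', groupAlgNorm2 y ≤ 1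
        ∧ r = groupAlgNorm2 (x * y)} := by
      ext r
      simp only [Set.mem_smul_set, Set.mem_setOf_eq]
      constructor
      · rintro ⟨y, hy, rfl⟩
        exact ⟨groupAlgNorm2 (x * y), ⟨y, hy, rfl⟩,
          by rw [smul_mul_assoc, groupAlgNorm2_smul, smul_eq_mul]⟩
      · rintro ⟨s, ⟨y, hy, rfl⟩, rfl⟩
        exact ⟨y, hy, by rw [smul_mul_assoc, groupAlgNorm2_smul, smul_eq_mul]⟩
    rw [groupAlgOpNorm, hset, Real.sSup_smul_of_nonneg (by positivity), smul_eq_mul,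
      groupAlgOpNorm]

lemma groupAlgNorm1_pos {x : MonoidAlgebra ℂ Γ'} (hx : x ≠ 0) : 0 < groupAlgNorm1 x := by
  obtain ⟨g, hg⟩ : x.coeff.support.Nonempty := Finsupp.support_nonempty_iff.2 (mt MonoidAlgebra.coeff_eq_zero.1 hx)
  have hg' : x.coeff g ≠ 0 := Finsupp.mem_support_iff.1 hg
  refine Finset.sum_pos' (fun i _ => by positivity) ⟨g, hg, ?_⟩
  simpa using hg'

lemma groupAlgMap_smul {G' : Type*} [Group G'] (φ : Γ' →* G') (c : ℂ)
    (x : MonoidAlgebra ℂ Γ') :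
    groupAlgMap φ (c • x) = c • groupAlgMap φ x := by
  unfold groupAlgMap
  exact congrArg MonoidAlgebra.ofCoeff (Finsupp.mapDomain_smul c x.coeff)

lemma real_le_of_forall_pos_le_add {a b : ℝ} (h : ∀ ε : ℝ, 0 < ε → a ≤ b + ε) : a ≤ b := by
  by_contra hab
  push_neg at hab
  have := h ((a - b) / 2) (by linarith)
  linarith

end Aux

/-- If `Γ` is existentially C*-residually-`G` (via an injective `ι : G → Γ`), then
there are a nonprincipal ultrafilter `U` on `ℕ` and homomorphisms `φₖ : Γ → G` with
`φₖ ∘ ι = id_G` such that for every `z ∈ ℂΓ`,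
`limsup_{k → U} ‖φₖ(z)‖ ≤ ‖z‖` (reduced operator norms). -/
theorem existentiallyCstarResidually_ultrapower {G Γ : Type*} [Group G] [Group Γ]
    [Countable G] [Countable Γ]
    (ι : G →* Γ) (hι : Function.Injective ι)
    (hres : ExistentiallyCstarResidually ι) :
    ∃ U : Ultrafilter ℕ, (∀ a : ℕ, U ≠ (pure a : Ultrafilter ℕ)) ∧
      ∃ φ : ℕ → (Γ →* G), (∀ k : ℕ, ∀ g : G, φ k (ι g) = g) ∧
        ∀ z : MonoidAlgebra ℂ Γ,
          Filter.limsup (fun k : ℕ => groupAlgOpNorm (groupAlgMap (φ k) z))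
            (U : Filter ℕ) ≤ groupAlgOpNorm z := by
  classical
  obtain ⟨e, he⟩ := exists_surjective_nat Γ
  set S : ℕ → Finset Γ := fun k => (Finset.range (k + 1)).image e with hS
  have hchoice : ∀ k : ℕ, ∃ φ : Γ →* G, (∀ g : G, φ (ι g) = g) ∧
      ∀ z : MonoidAlgebra ℂ Γ, (↑z.coeff.support : Set Γ) ⊆ (↑(S k) : Set Γ) →
        groupAlgNorm1 z = 1 →
        groupAlgOpNorm (groupAlgMap φ z) ≤ groupAlgOpNorm z + 1 / (k + 1) := by
    intro k
    exact hres (S k) (1 / (k + 1)) (by positivity)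
  choose φ hφid hφ using hchoice
  refine ⟨Filter.hyperfilter ℕ, ?_, φ, hφid, ?_⟩
  · intro a h
    have h1 : ({a} : Set ℕ) ∈ (Filter.hyperfilter ℕ : Filter ℕ) := by
      rw [h]; exact Filter.mem_pure.2 rfl
    exact (Set.finite_singleton a).notMem_hyperfilter h1
  · intro z
    rcases eq_or_ne z 0 with rfl | hz
    · have : ∀ k : ℕ, groupAlgOpNorm (groupAlgMap (φ k) (0 : MonoidAlgebra ℂ Γ)) = 0 := by
        intro k
        have : groupAlgMap (φ k) (0 : MonoidAlgebra ℂ Γ) = 0 := by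
          unfold groupAlgMap; exact congrArg MonoidAlgebra.ofCoeff Finsupp.mapDomain_zero
        rw [this, groupAlgOpNorm_zero]
      simp only [this]
      rw [Filter.limsup_const, groupAlgOpNorm_zero]
    · set c : ℝ := groupAlgNorm1 z with hc
      have hcpos : 0 < c := groupAlgNorm1_pos hz
      have hcne : ((c : ℂ)) ≠ 0 := by
        simp only [ne_eq, Complex.ofReal_eq_zero]; exact hcpos.ne'
      set w : MonoidAlgebra ℂ Γ := ((c : ℂ))⁻¹ • z with hw
      have hzw : z = (c : ℂ) • w := by
        rw [hw, smul_smul, mul_inv_cancel₀ hcne, one_smul]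
      have hwsupp : w.coeff.support = z.coeff.support := by
        rw [hw]; exact Finsupp.support_smul_eq (inv_ne_zero hcne)
      have hw1 : groupAlgNorm1 w = 1 := by
        rw [hw, groupAlgNorm1_smul, norm_inv, Complex.norm_real, Real.norm_eq_abs, abs_of_pos hcpos, ← hc]
        field_simp
      have habs : ‖((c : ℂ))‖ = c := by
        rw [Complex.norm_real, Real.norm_eq_abs, abs_of_pos hcpos]
      have hopz : groupAlgOpNorm z = c * groupAlgOpNorm w := by
        rw [hzw, groupAlgOpNorm_smul, habs]
      have hkey : ∀ k : ℕ, (↑z.coeff.support : Set Γ) ⊆ (↑(S k) : Set Γ) →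
          groupAlgOpNorm (groupAlgMap (φ k) z) ≤ groupAlgOpNorm z + c * (1 / (k + 1)) := by
        intro k hsupp
        have hb := hφ k w (by rw [hwsupp]; exact hsupp) hw1
        have : groupAlgOpNorm (groupAlgMap (φ k) z)
            = c * groupAlgOpNorm (groupAlgMap (φ k) w) := by
          rw [hzw, groupAlgMap_smul, groupAlgOpNorm_smul, habs]
        rw [this, hopz, ← mul_add]
        exact mul_le_mul_of_nonneg_left hb hcpos.le
      -- eventually the support is contained in S k
      have hsupp_ev : ∀ᶠ k in atTop, (↑z.coeff.support : Set Γ) ⊆ (↑(S k) : Set Γ) := by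
        have hmem : ∀ g ∈ z.coeff.support, ∃ n : ℕ, e n = g := fun g _ => he g
        choose n hn using hmem
        set N : ℕ := z.coeff.support.sup (fun g => if h : g ∈ z.coeff.support then n g h else 0) with hN
        filter_upwards [eventually_ge_atTop N] with k hk
        intro g hg
        have hg' : g ∈ z.coeff.support := Finset.mem_coe.1 hg
        have hle : (if h : g ∈ z.coeff.support then n g h else 0) ≤ N :=
          Finset.le_sup (f := fun g => if h : g ∈ z.coeff.support then n g h else 0) hg'
        rw [dif_pos hg'] at hle
        rw [Finset.mem_coe, hS, Finset.mem_image]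
        exact ⟨n g hg', Finset.mem_range.2 (by omega), hn g hg'⟩
      have hmain : ∀ δ : ℝ, 0 < δ →
          Filter.limsup (fun k : ℕ => groupAlgOpNorm (groupAlgMap (φ k) z))
            (Filter.hyperfilter ℕ : Filter ℕ) ≤ groupAlgOpNorm z + δ := by
        intro δ hδ
        have hsmall : ∀ᶠ k : ℕ in atTop, c * (1 / (k + 1)) ≤ δ := by
          have : Tendsto (fun k : ℕ => c * (1 / ((k : ℝ) + 1))) atTop (nhds (c * 0)) :=
            (tendsto_one_div_add_atTop_nhds_zero_nat).const_mul c
          rw [mul_zero] at this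
          exact this.eventually_le_const hδ
        have hev : ∀ᶠ k : ℕ in atTop,
            groupAlgOpNorm (groupAlgMap (φ k) z) ≤ groupAlgOpNorm z + δ := by
          filter_upwards [hsupp_ev, hsmall] with k h1 h2
          exact (hkey k h1).trans (by linarith)
        have hev' : ∀ᶠ k : ℕ in (Filter.hyperfilter ℕ : Filter ℕ),
            groupAlgOpNorm (groupAlgMap (φ k) z) ≤ groupAlgOpNorm z + δ :=
          hev.filter_mono Nat.hyperfilter_le_atTop
        refine Filter.limsup_le_of_le ?_ hev'
        exact Filter.isCoboundedUnder_le_of_le _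
          (fun k => groupAlgOpNorm_nonneg (groupAlgMap (φ k) z))
      exact real_le_of_forall_pos_le_add hmain
end

section
/- Let Γ = ℤ ∗ (ℤ × ℤ) be the free product of an infinite cyclic group with generator x and the free abelian group ℤ × ℤ with generators y and t (so y and t commute). Then the group homomorphism from the free group F_3 of rank 3 to Γ sending the three free generators to x, y, and t·x·t respectively is injective; in particular, x, y, and t·x·t generate a free subgroup of Γ of rank 3, which contains the rank-2 free subgroup of Γ generated by x and y. -/
open Monoid CoprodI Multiplicative

namespace PingPongAux

section general

variable {ι : Type*} {G : ι → Type*} [∀ i, Group (G i)] [∀ i, DecidableEq (G i)]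
  [DecidableEq ι]

open CoprodI.Word

theorem head?_of_smul_of_fstIdx_ne {i : ι} (m : G i) (hm : m ≠ 1) (w : Word G)
    (h : w.fstIdx ≠ some i) :
    (CoprodI.of m • w).toList.head? = some ⟨i, m⟩ := by
  rw [of_smul_def, equivPair_eq_of_fstIdx_ne h]
  simp [rcons, hm, cons]

theorem head?_smul_cases {i : ι} (m : G i) (w : Word G) (hm : m ≠ 1)
    (hcancel : ∀ m' : G i, w.toList.head? = some ⟨i, m'⟩ → m * m' ≠ 1) :
    ((CoprodI.of m • w).toList.head? = some ⟨i, m⟩ ∧ w.fstIdx ≠ some i) ∨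
    ∃ m' : G i, w.toList.head? = some ⟨i, m'⟩ ∧
      (CoprodI.of m • w).toList.head? = some ⟨i, m * m'⟩ := by
  by_cases h : w.fstIdx = some i
  · right
    induction w using Word.consRecOn with
    | empty => simp [fstIdx] at h
    | cons j m' w' h1 h2 ih =>
      have hji : j = i := by simpa [fstIdx, Word.cons] using h
      subst hji
      refine ⟨m', by simp [Word.cons], ?_⟩
      have hc : m * m' ≠ 1 := hcancel m' (by simp [Word.cons])
      rw [cons_eq_smul, ← mul_smul, ← map_mul]
      exact head?_of_smul_of_fstIdx_ne _ hc _ h1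
  · exact Or.inl ⟨head?_of_smul_of_fstIdx_ne m hm w h, h⟩

end general

/-- The Bool-indexed family: `true ↦ ℤ`, `false ↦ ℤ × ℤ` (multiplicatively). -/
abbrev GG : Bool → Type := fun b => cond b (Multiplicative ℤ) (Multiplicative (ℤ × ℤ))

instance : ∀ b, Group (GG b) := by rintro (_ | _) <;> dsimp [GG] <;> infer_instance
instance : ∀ b, DecidableEq (GG b) := by rintro (_ | _) <;> dsimp [GG] <;> infer_instance

def xg (e : ℤ) : GG true := show Multiplicative ℤ from ofAdd e
def tg (p : ℤ × ℤ) : GG false := show Multiplicative (ℤ × ℤ) from ofAdd p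
def unx (m : GG true) : ℤ := toAdd (show Multiplicative ℤ from m)
def unt (m : GG false) : ℤ × ℤ := toAdd (show Multiplicative (ℤ × ℤ) from m)

@[simp] theorem xg_mul (a b : ℤ) : xg a * xg b = xg (a + b) := rfl
@[simp] theorem tg_mul (p q : ℤ × ℤ) : tg p * tg q = tg (p + q) := rfl
@[simp] theorem unx_xg (a : ℤ) : unx (xg a) = a := rfl
@[simp] theorem unt_tg (p : ℤ × ℤ) : unt (tg p) = p := rfl
theorem xg_unx (m : GG true) : xg (unx m) = m := rfl
@[simp] theorem unx_one : unx 1 = 0 := rfl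
@[simp] theorem unt_one : unt 1 = 0 := rfl
theorem tg_unt (m : GG false) : tg (unt m) = m := rfl
@[simp] theorem xg_eq_one {a : ℤ} : xg a = 1 ↔ a = 0 := by
  constructor
  · intro h; simpa using congrArg unx h
  · rintro rfl; rfl
@[simp] theorem tg_eq_one {p : ℤ × ℤ} : tg p = 1 ↔ p = 0 := by
  constructor
  · intro h; simpa using congrArg unt h
  · rintro rfl; rfl
theorem xg_injective : Function.Injective xg := fun a b h => by
  simpa using congrArg unx h
theorem tg_injective : Function.Injective tg := fun a b h => by
  simpa using congrArg unt h

/-- The canonical hom `ℤ ∗ (ℤ × ℤ) →* CoprodI GG`. -/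
def φ : Coprod (Multiplicative ℤ) (Multiplicative (ℤ × ℤ)) →* CoprodI GG :=
  Coprod.lift (CoprodI.of (M := GG) (i := true)) (CoprodI.of (M := GG) (i := false))

theorem φ_inl (n : ℤ) :
    φ (Coprod.inl (ofAdd n)) = CoprodI.of (M := GG) (i := true) (xg n) :=
  Coprod.lift_apply_inl _ _ _

theorem φ_inr (p : ℤ × ℤ) :
    φ (Coprod.inr (ofAdd p)) = CoprodI.of (M := GG) (i := false) (tg p) :=
  Coprod.lift_apply_inr _ _ _

open CoprodI.Word

theorem smul_x (e : ℤ) (he : e = 1 ∨ e = -1) (w : Word GG)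
    (hw : ∀ n : ℤ, w.toList.head? = some ⟨true, xg n⟩ → 0 ≤ e * n) :
    ∃ n : ℤ, 1 ≤ e * n ∧
      (CoprodI.of (M := GG) (i := true) (xg e) • w).toList.head? = some ⟨true, xg n⟩ := by
  have he0 : e ≠ 0 := by rcases he with rfl | rfl <;> decide
  have hm : xg e ≠ 1 := fun h => he0 (by simpa using congrArg unx h)
  have hc : ∀ m' : GG true, w.toList.head? = some ⟨true, m'⟩ → xg e * m' ≠ 1 := by
    intro m' hm' hcon
    have h0 := hw (unx m') (by rw [hm', xg_unx])
    rw [← xg_unx m', xg_mul, xg_eq_one] at hcon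
    rcases he with rfl | rfl <;> omega
  rcases head?_smul_cases (G := GG) (i := true) (xg e) w hm hc with
    ⟨h1, _⟩ | ⟨m', hm', h2⟩
  · exact ⟨e, by rcases he with rfl | rfl <;> decide, h1⟩
  · have hmm : xg e * m' = xg (e + unx m') := by rw [← xg_unx m', xg_mul, unx_xg]
    refine ⟨e + unx m', ?_, by rw [h2, hmm]⟩
    have h0 := hw (unx m') (by rw [hm', xg_unx])
    rcases he with rfl | rfl <;> omega

theorem smul_y (e : ℤ) (he : e = 1 ∨ e = -1) (w : Word GG)
    (hw : ∀ p : ℤ × ℤ, w.toList.head? = some ⟨false, tg p⟩ → 0 ≤ e * p.1) :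
    ∃ p : ℤ × ℤ, 1 ≤ e * p.1 ∧
      (CoprodI.of (M := GG) (i := false) (tg (e, 0)) • w).toList.head?
        = some ⟨false, tg p⟩ := by
  have he0 : e ≠ 0 := by rcases he with rfl | rfl <;> decide
  have hm : tg (e, 0) ≠ 1 := by
    intro h
    have h' := congrArg unt h
    simp [Prod.ext_iff] at h'
    omega
  have hc : ∀ m' : GG false, w.toList.head? = some ⟨false, m'⟩ → tg (e, 0) * m' ≠ 1 := by
    intro m' hm' hcon
    have h0 := hw (unt m') (by rw [hm', tg_unt])
    rw [← tg_unt m', tg_mul, tg_eq_one, Prod.ext_iff] at hcon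
    simp at hcon
    rcases he with rfl | rfl <;> omega
  rcases head?_smul_cases (G := GG) (i := false) (tg (e, 0)) w hm hc with
    ⟨h1, _⟩ | ⟨m', hm', h2⟩
  · exact ⟨(e, 0), by rcases he with rfl | rfl <;> decide, h1⟩
  · have hmm : tg (e, 0) * m' = tg ((e, 0) + unt m') := by rw [← tg_unt m', tg_mul, unt_tg]
    refine ⟨(e, 0) + unt m', ?_, by rw [h2, hmm]⟩
    have h0 := hw (unt m') (by rw [hm', tg_unt])
    have h1 : ((e, 0) + unt m').1 = e + (unt m').1 := rfl
    rw [h1]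
    rcases he with rfl | rfl <;> omega

theorem smul_txt (e : ℤ) (he : e = 1 ∨ e = -1) (w : Word GG)
    (hw : w.toList.head? ≠ some ⟨false, tg (0, -e)⟩) :
    (CoprodI.of (M := GG) (i := false) (tg (0, e)) •
      (CoprodI.of (M := GG) (i := true) (xg e) •
        (CoprodI.of (M := GG) (i := false) (tg (0, e)) • w))).toList.head?
      = some ⟨false, tg (0, e)⟩ := by
  have he0 : e ≠ 0 := by rcases he with rfl | rfl <;> decide
  have hmt : tg (0, e) ≠ 1 := by
    intro h
    have h' := congrArg unt h
    simp [Prod.ext_iff] at h'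
    omega
  have hmx : xg e ≠ 1 := fun h => he0 (by simpa using congrArg unx h)
  have hc : ∀ m' : GG false, w.toList.head? = some ⟨false, m'⟩ → tg (0, e) * m' ≠ 1 := by
    intro m' hm' hcon
    apply hw
    rw [← tg_unt m', tg_mul, tg_eq_one, Prod.ext_iff] at hcon
    simp at hcon
    have : unt m' = (0, -e) := by
      obtain ⟨h1, h2⟩ := hcon
      exact Prod.ext h1 (by omega)
    rw [hm', ← tg_unt m', this]
  obtain ⟨q, hq⟩ : ∃ q : GG false,
      (CoprodI.of (M := GG) (i := false) (tg (0, e)) • w).toList.head? = some ⟨false, q⟩ := by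
    rcases head?_smul_cases (G := GG) (i := false) (tg (0, e)) w hmt hc with
      ⟨h1, _⟩ | ⟨m', _, h2⟩
    · exact ⟨_, h1⟩
    · exact ⟨_, h2⟩
  set w₁ := CoprodI.of (M := GG) (i := false) (tg (0, e)) • w with hw₁
  have hfst₁ : w₁.fstIdx ≠ some true := by simp [fstIdx, hq]
  have h2 : (CoprodI.of (M := GG) (i := true) (xg e) • w₁).toList.head?
      = some ⟨true, xg e⟩ := head?_of_smul_of_fstIdx_ne _ hmx _ hfst₁
  set w₂ := CoprodI.of (M := GG) (i := true) (xg e) • w₁ with hw₂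
  have hfst₂ : w₂.fstIdx ≠ some false := by simp [fstIdx, h2]
  exact head?_of_smul_of_fstIdx_ne _ hmt _ hfst₂


/-- Sets of reduced words described by a predicate on the first letter. -/
def S (P : (Σ b, GG b) → Prop) : Set (Word GG) :=
  {w | ∃ l, w.toList.head? = some l ∧ P l}

theorem S_disjoint {P Q : (Σ b, GG b) → Prop} (h : ∀ l, P l → Q l → False) :
    Disjoint (S P) (S Q) := by
  rw [Set.disjoint_left]
  rintro w ⟨l, hl, hP⟩ ⟨l', hl', hQ⟩
  rw [hl, Option.some_inj] at hl'
  exact h l hP (hl' ▸ hQ)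

def P0 (e : ℤ) : (Σ b, GG b) → Prop := fun l => ∃ n : ℤ, 1 ≤ e * n ∧ l = ⟨true, xg n⟩
def P1 (e : ℤ) : (Σ b, GG b) → Prop := fun l => ∃ p : ℤ × ℤ, 1 ≤ e * p.1 ∧ l = ⟨false, tg p⟩
def P2 (e : ℤ) : (Σ b, GG b) → Prop := fun l => l = ⟨false, tg (0, e)⟩

/-- The ping-pong sets. -/
def XY (e : ℤ) : Fin 3 → Set (Word GG) := ![S (P0 e), S (P1 e), S (P2 e)]

theorem sig_true {m m' : GG true} (h : (⟨true, m⟩ : Σ b, GG b) = ⟨true, m'⟩) : m = m' := by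
  simpa using h

theorem sig_false {m m' : GG false} (h : (⟨false, m⟩ : Σ b, GG b) = ⟨false, m'⟩) : m = m' := by
  simpa using h

theorem disj00 {e f : ℤ} (h : ∀ n : ℤ, 1 ≤ e * n → 1 ≤ f * n → False) :
    Disjoint (S (P0 e)) (S (P0 f)) := by
  refine S_disjoint ?_
  rintro l ⟨n, hn, rfl⟩ ⟨n', hn', hl⟩
  have h2 := xg_injective (sig_true hl)
  subst h2
  exact h n hn hn'

theorem disj11 {e f : ℤ} (h : ∀ a : ℤ, 1 ≤ e * a → 1 ≤ f * a → False) :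
    Disjoint (S (P1 e)) (S (P1 f)) := by
  refine S_disjoint ?_
  rintro l ⟨p, hp, rfl⟩ ⟨p', hp', hl⟩
  have h2 := tg_injective (sig_false hl)
  subst h2
  exact h p.1 hp hp'

theorem disj01 {e f : ℤ} : Disjoint (S (P0 e)) (S (P1 f)) := by
  refine S_disjoint ?_
  rintro l ⟨n, hn, rfl⟩ ⟨p, hp, hl⟩
  simp at hl

theorem disj02 {e f : ℤ} : Disjoint (S (P0 e)) (S (P2 f)) := by
  refine S_disjoint ?_
  rintro l ⟨n, hn, rfl⟩ hl
  simp [P2] at hl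

theorem disj12 {e f : ℤ} (h : ∀ p : ℤ × ℤ, 1 ≤ e * p.1 → p = (0, f) → False) :
    Disjoint (S (P1 e)) (S (P2 f)) := by
  refine S_disjoint ?_
  rintro l ⟨p, hp, rfl⟩ hl
  exact h p hp (tg_injective (sig_false hl))

theorem disj22 {e f : ℤ} (h : e ≠ f) : Disjoint (S (P2 e)) (S (P2 f)) := by
  refine S_disjoint ?_
  rintro l rfl hl
  have h2 := tg_injective (sig_false hl)
  exact h (by simpa [Prod.ext_iff] using h2)

theorem disj12' {e f : ℤ} (he : e = 1 ∨ e = -1) : Disjoint (S (P1 e)) (S (P2 f)) := by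
  refine disj12 ?_
  rintro p hp rfl
  simp at hp

/-- A single-letter word. -/
def single (l : Σ b, GG b) (hl : l.2 ≠ 1) : Word GG where
  toList := [l]
  ne_one := by rintro l' hl'; simp at hl'; subst hl'; exact hl
  chain_ne := List.isChain_singleton _

theorem XY_nonempty (e : ℤ) (he : e = 1 ∨ e = -1) (i : Fin 3) : (XY e i).Nonempty := by
  have he0 : e ≠ 0 := by rcases he with rfl | rfl <;> decide
  have hx : xg e ≠ 1 := fun h => he0 (by simpa using congrArg unx h)
  have ht : tg (e, 0) ≠ 1 := by
    intro h
    have h' := congrArg unt h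
    simp [Prod.ext_iff] at h'
    omega
  have ht2 : tg (0, e) ≠ 1 := by
    intro h
    have h' := congrArg unt h
    simp [Prod.ext_iff] at h'
    omega
  match i with
  | 0 => exact ⟨single ⟨true, xg e⟩ hx, ⟨true, xg e⟩, rfl,
      ⟨e, by rcases he with rfl | rfl <;> decide, rfl⟩⟩
  | 1 => exact ⟨single ⟨false, tg (e, 0)⟩ ht, ⟨false, tg (e, 0)⟩, rfl,
      ⟨(e, 0), by rcases he with rfl | rfl <;> decide, rfl⟩⟩
  | 2 => exact ⟨single ⟨false, tg (0, e)⟩ ht2, ⟨false, tg (0, e)⟩, rfl, rfl⟩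

instance : MulAction (Coprod (Multiplicative ℤ) (Multiplicative (ℤ × ℤ))) (Word GG) :=
  MulAction.compHom _ φ

theorem coprod_smul_def (g : Coprod (Multiplicative ℤ) (Multiplicative (ℤ × ℤ)))
    (w : Word GG) : g • w = φ g • w := rfl

theorem cond0 (e : ℤ) (he : e = 1 ∨ e = -1) (w : Word GG) (hw : w ∉ S (P0 (-e))) :
    CoprodI.of (M := GG) (i := true) (xg e) • w ∈ S (P0 e) := by
  obtain ⟨n, h1, h2⟩ := smul_x e he w (by
    intro n hn
    by_contra hcon
    exact hw ⟨⟨true, xg n⟩, hn, ⟨n, by rcases he with rfl | rfl <;> omega, rfl⟩⟩)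
  exact ⟨⟨true, xg n⟩, h2, ⟨n, h1, rfl⟩⟩

theorem cond1 (e : ℤ) (he : e = 1 ∨ e = -1) (w : Word GG) (hw : w ∉ S (P1 (-e))) :
    CoprodI.of (M := GG) (i := false) (tg (e, 0)) • w ∈ S (P1 e) := by
  obtain ⟨p, h1, h2⟩ := smul_y e he w (by
    intro p hp
    by_contra hcon
    exact hw ⟨⟨false, tg p⟩, hp, ⟨p, by rcases he with rfl | rfl <;> omega, rfl⟩⟩)
  exact ⟨⟨false, tg p⟩, h2, ⟨p, h1, rfl⟩⟩

theorem cond2 (e : ℤ) (he : e = 1 ∨ e = -1) (w : Word GG) (hw : w ∉ S (P2 (-e))) :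
    CoprodI.of (M := GG) (i := false) (tg (0, e)) •
      (CoprodI.of (M := GG) (i := true) (xg e) •
        (CoprodI.of (M := GG) (i := false) (tg (0, e)) • w)) ∈ S (P2 e) := by
  have h2 := smul_txt e he w (by
    intro hcon
    exact hw ⟨⟨false, tg (0, -e)⟩, hcon, rfl⟩)
  exact ⟨⟨false, tg (0, e)⟩, h2, rfl⟩

theorem xg_inv (a : ℤ) : (xg a)⁻¹ = xg (-a) := rfl
theorem tg_inv (p : ℤ × ℤ) : (tg p)⁻¹ = tg (-p) := rfl

end PingPongAux

open PingPongAux Pointwise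

/-- In `Γ = ℤ ∗ (ℤ × ℤ)` with `x` the generator of the first factor and `y, t` the
generators of the second (so `y` and `t` commute), the homomorphism `F₃ → Γ` sending
the three free generators to `x`, `y`, `t·x·t` is injective; in particular `x`, `y`,
`t·x·t` generate a free subgroup of rank 3 containing the rank-2 free subgroup
generated by `x` and `y`. -/
theorem freeSubgroup_of_extension_of_centralizers :
    Function.Injective
      (FreeGroup.lift
        (![Coprod.inl (Multiplicative.ofAdd (1 : ℤ)),
           Coprod.inr (Multiplicative.ofAdd ((1 : ℤ), (0 : ℤ))),
           Coprod.inr (Multiplicative.ofAdd ((0 : ℤ), (1 : ℤ))) *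
             Coprod.inl (Multiplicative.ofAdd (1 : ℤ)) *
             Coprod.inr (Multiplicative.ofAdd ((0 : ℤ), (1 : ℤ)))]) :
        FreeGroup (Fin 3) →* Coprod (Multiplicative ℤ) (Multiplicative (ℤ × ℤ))) ∧
    Subgroup.closure {Coprod.inl (Multiplicative.ofAdd (1 : ℤ)),
        Coprod.inr (Multiplicative.ofAdd ((1 : ℤ), (0 : ℤ)))} ≤
      Subgroup.closure {Coprod.inl (Multiplicative.ofAdd (1 : ℤ)),
        Coprod.inr (Multiplicative.ofAdd ((1 : ℤ), (0 : ℤ))),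
        Coprod.inr (Multiplicative.ofAdd ((0 : ℤ), (1 : ℤ))) *
          Coprod.inl (Multiplicative.ofAdd (1 : ℤ)) *
          Coprod.inr (Multiplicative.ofAdd ((0 : ℤ), (1 : ℤ)))} := by
  constructor
  · apply FreeGroup.injective_lift_of_ping_pong _ (XY 1) (XY (-1))
    · exact XY_nonempty 1 (Or.inl rfl)
    · -- X pairwise disjoint
      intro i j hij
      match i, j with
      | 0, 0 => exact absurd rfl hij
      | 1, 1 => exact absurd rfl hij
      | 2, 2 => exact absurd rfl hij
      | 0, 1 => exact disj01
      | 0, 2 => exact disj02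
      | 1, 0 => exact disj01.symm
      | 2, 0 => exact disj02.symm
      | 1, 2 => exact disj12' (Or.inl rfl)
      | 2, 1 => exact (disj12' (Or.inl rfl)).symm
    · -- Y pairwise disjoint
      intro i j hij
      match i, j with
      | 0, 0 => exact absurd rfl hij
      | 1, 1 => exact absurd rfl hij
      | 2, 2 => exact absurd rfl hij
      | 0, 1 => exact disj01
      | 0, 2 => exact disj02
      | 1, 0 => exact disj01.symm
      | 2, 0 => exact disj02.symm
      | 1, 2 => exact disj12' (Or.inr rfl)
      | 2, 1 => exact (disj12' (Or.inr rfl)).symm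
    · -- X i disjoint from Y j
      intro i j
      match i, j with
      | 0, 0 => exact disj00 (by intro n h1 h2; omega)
      | 1, 1 => exact disj11 (by intro a h1 h2; omega)
      | 2, 2 => exact disj22 (by norm_num)
      | 0, 1 => exact disj01
      | 0, 2 => exact disj02
      | 1, 0 => exact disj01.symm
      | 2, 0 => exact disj02.symm
      | 1, 2 => exact disj12' (Or.inl rfl)
      | 2, 1 => exact (disj12' (Or.inr rfl)).symm
    · -- a i • (Y i)ᶜ ⊆ X i
      intro i
      match i with
      | 0 =>
        intro v hv
        rw [Set.mem_smul_set] at hv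
        obtain ⟨w, hw, rfl⟩ := hv
        show Coprod.inl (Multiplicative.ofAdd (1 : ℤ)) • w ∈ S (P0 1)
        rw [coprod_smul_def, φ_inl]
        exact cond0 1 (Or.inl rfl) w hw
      | 1 =>
        intro v hv
        rw [Set.mem_smul_set] at hv
        obtain ⟨w, hw, rfl⟩ := hv
        show Coprod.inr (Multiplicative.ofAdd ((1 : ℤ), (0 : ℤ))) • w ∈ S (P1 1)
        rw [coprod_smul_def, φ_inr]
        exact cond1 1 (Or.inl rfl) w hw
      | 2 =>
        intro v hv
        rw [Set.mem_smul_set] at hv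
        obtain ⟨w, hw, rfl⟩ := hv
        show (Coprod.inr (Multiplicative.ofAdd ((0 : ℤ), (1 : ℤ))) *
             Coprod.inl (Multiplicative.ofAdd (1 : ℤ)) *
             Coprod.inr (Multiplicative.ofAdd ((0 : ℤ), (1 : ℤ)))) • w ∈ S (P2 1)
        rw [coprod_smul_def, map_mul, map_mul, φ_inl, φ_inr, mul_smul, mul_smul]
        exact cond2 1 (Or.inl rfl) w hw
    · -- (a i)⁻¹ • (X i)ᶜ ⊆ Y i
      intro i
      match i with
      | 0 =>
        intro v hv
        rw [Set.mem_smul_set] at hv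
        obtain ⟨w, hw, rfl⟩ := hv
        show (Coprod.inl (Multiplicative.ofAdd (1 : ℤ)))⁻¹ • w ∈ S (P0 (-1))
        rw [coprod_smul_def, map_inv, φ_inl, ← map_inv, xg_inv]
        exact cond0 (-1) (Or.inr rfl) w (by simpa [XY] using hw)
      | 1 =>
        intro v hv
        rw [Set.mem_smul_set] at hv
        obtain ⟨w, hw, rfl⟩ := hv
        show (Coprod.inr (Multiplicative.ofAdd ((1 : ℤ), (0 : ℤ))))⁻¹ • w ∈ S (P1 (-1))
        rw [coprod_smul_def, map_inv, φ_inr, ← map_inv, tg_inv]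
        have : (-((1 : ℤ), (0 : ℤ))) = ((-1 : ℤ), (0 : ℤ)) := by simp
        rw [this]
        exact cond1 (-1) (Or.inr rfl) w (by simpa [XY] using hw)
      | 2 =>
        intro v hv
        rw [Set.mem_smul_set] at hv
        obtain ⟨w, hw, rfl⟩ := hv
        show ((Coprod.inr (Multiplicative.ofAdd ((0 : ℤ), (1 : ℤ))) *
             Coprod.inl (Multiplicative.ofAdd (1 : ℤ)) *
             Coprod.inr (Multiplicative.ofAdd ((0 : ℤ), (1 : ℤ))))⁻¹) • w ∈ S (P2 (-1))
        rw [coprod_smul_def, map_inv, map_mul, map_mul, φ_inl, φ_inr,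
          mul_inv_rev, mul_inv_rev, ← map_inv, ← map_inv, xg_inv, tg_inv]
        have h1 : (-((0 : ℤ), (1 : ℤ))) = ((0 : ℤ), (-1 : ℤ)) := by simp
        rw [h1, mul_smul, mul_smul]
        exact cond2 (-1) (Or.inr rfl) w (by simpa [XY] using hw)
  · apply Subgroup.closure_mono
    intro z hz
    simp only [Set.mem_insert_iff, Set.mem_singleton_iff] at hz ⊢
    tauto
end
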